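/- arXiv:1604.05494 — 14 statements merged into one kernel-verified Lean document; each statement's English description precedes it below -/
import Mathlib

section
/- Let λ > 0 and let a, b be complex numbers with r₁, r₂ > 0 positive reals satisfying r₁·|a| + r₂·|b| ≤ 1. Then |λa² − b| ≤ max{λ/r₁², 1/r₂}. -/
theorem stmt_1 (lam : ℝ) (hlam : 0 < lam) (a b : ℂ) (r1 r2 : ℝ)
    (hr1 : 0 < r1) (hr2 : 0 < r2)
    (h : r1 * ‖a‖ + r2 * ‖b‖ ≤ 1) :
    ‖(lam * a ^ 2 - b : ℂ)‖ ≤ max (lam / r1 ^ 2) (1 / r2) := by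
  set x := ‖a‖ with hxdef
  set y := ‖b‖ with hydef
  have hx : 0 ≤ x := norm_nonneg a
  have hy : 0 ≤ y := norm_nonneg b
  have h1 : ‖(lam * a ^ 2 - b : ℂ)‖ ≤ lam * x ^ 2 + y := by
    calc ‖(lam * a ^ 2 - b : ℂ)‖
        ≤ ‖(lam * a ^ 2 : ℂ)‖ + ‖b‖ := norm_sub_le _ _
      _ = lam * x ^ 2 + y := by
          rw [norm_mul, norm_pow, Complex.norm_real, Real.norm_eq_abs, abs_of_pos hlam]
  refine h1.trans ?_
  set M := max (lam / r1 ^ 2) (1 / r2) with hM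
  have hM1 : lam / r1 ^ 2 ≤ M := le_max_left _ _
  have hM2 : 1 / r2 ≤ M := le_max_right _ _
  have ht1 : r1 * x ≤ 1 := by nlinarith
  have key1 : lam * x ^ 2 ≤ (r1 * x) * M := by
    have : lam * x ^ 2 ≤ (r1 * x) * (lam / r1 ^ 2) := by
      rw [mul_div_assoc', le_div_iff₀ (by positivity)]
      nlinarith [mul_le_mul_of_nonneg_left ht1 (mul_nonneg (mul_nonneg hlam.le hx) hr1.le)]
    refine this.trans ?_
    exact mul_le_mul_of_nonneg_left hM1 (by positivity)
  have key2 : y ≤ (1 - r1 * x) * M := by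
    have hy2 : r2 * y ≤ 1 - r1 * x := by linarith
    have : y ≤ (1 - r1 * x) * (1 / r2) := by
      rw [mul_one_div, le_div_iff₀ hr2]
      linarith
    refine this.trans ?_
    exact mul_le_mul_of_nonneg_left hM2 (by nlinarith)
  nlinarith
end

section
/- Let r : ℕ → ℝ be a positive function (r(n) > 0 for all n ≥ 2), and let f(z) = z + ∑_{n≥2} aₙ zⁿ be a power series with complex coefficients satisfying ∑_{n≥2} r(n)|aₙ| ≤ 1. Then for every λ > 0 and every n ≥ 2, |λ aₙ² − a_{2n−1}| ≤ max{λ/r(n)², 1/r(2n−1)}. -/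
theorem stmt_2 (r : ℕ → ℝ) (hr : ∀ n, 2 ≤ n → 0 < r n) (a : ℕ → ℂ)
    (hsum : Summable (fun n : ℕ => r (n + 2) * ‖a (n + 2)‖))
    (h : ∑' n : ℕ, r (n + 2) * ‖a (n + 2)‖ ≤ 1)
    (lam : ℝ) (hlam : 0 < lam) (n : ℕ) (hn : 2 ≤ n) :
    ‖lam * (a n) ^ 2 - a (2 * n - 1)‖ ≤
      max (lam / (r n) ^ 2) (1 / r (2 * n - 1)) := by
  set m := 2 * n - 1 with hm
  have hm2 : 2 ≤ m := by omega
  have hrn : 0 < r n := hr n hn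
  have hrm : 0 < r m := hr m hm2
  set x := ‖a n‖ with hxdef
  set y := ‖a m‖ with hydef
  have hx : 0 ≤ x := norm_nonneg _
  have hy : 0 ≤ y := norm_nonneg _
  -- two-term bound
  have key : r n * x + r m * y ≤ 1 := by
    have hne : n - 2 ≠ 2 * n - 3 := by omega
    have hle : ∑ i ∈ ({n - 2, 2 * n - 3} : Finset ℕ),
        r (i + 2) * ‖a (i + 2)‖ ≤
        ∑' i : ℕ, r (i + 2) * ‖a (i + 2)‖ := by
      refine Summable.sum_le_tsum _ (fun i _ => ?_) hsum
      have := hr (i + 2) (by omega)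
      positivity
    rw [Finset.sum_insert (by simp [hne]), Finset.sum_singleton] at hle
    have e1 : n - 2 + 2 = n := by omega
    have e2 : 2 * n - 3 + 2 = m := by omega
    rw [e1, e2] at hle
    linarith
  have hvn : 0 ≤ r n * x := by positivity
  have hvm : 0 ≤ r m * y := by positivity
  set A := lam / (r n) ^ 2 with hA
  set B := 1 / r m with hB
  have hApos : 0 < A := by positivity
  have hBpos : 0 < B := by positivity
  have hAM : A ≤ max A B := le_max_left _ _
  have hBM : B ≤ max A B := le_max_right _ _
  have hM : 0 ≤ max A B := le_of_lt (lt_of_lt_of_le hApos hAM)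
  have tri : ‖(lam : ℂ) * (a n) ^ 2 - a m‖ ≤ lam * x ^ 2 + y := by
    have t1 : ‖(lam : ℂ) * (a n) ^ 2 - a m‖
        ≤ ‖(lam : ℂ) * (a n) ^ 2‖ + ‖-a m‖ := by
      rw [sub_eq_add_neg]; exact norm_add_le _ _
    rw [norm_neg, norm_mul, norm_pow, Complex.norm_real, Real.norm_eq_abs, abs_of_pos hlam] at t1
    exact t1
  have sq : lam * x ^ 2 ≤ A * (r n * x) := by
    have h1 : r n * x ≤ 1 := by linarith
    have h2 : (r n * x) ^ 2 ≤ r n * x := by nlinarith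
    have h3 : A * (r n * x) ^ 2 = lam * x ^ 2 := by
      rw [hA, div_mul_eq_mul_div, div_eq_iff (by positivity)]
      ring
    nlinarith
  have hy' : y = B * (r m * y) := by
    rw [hB, one_div, ← mul_assoc, inv_mul_cancel₀ hrm.ne', one_mul]
  calc ‖(lam : ℂ) * (a n) ^ 2 - a m‖ ≤ lam * x ^ 2 + y := tri
    _ ≤ A * (r n * x) + B * (r m * y) := by rw [hy'] at *; linarith
    _ ≤ max A B * (r n * x) + max A B * (r m * y) := by
        gcongr
    _ = max A B * (r n * x + r m * y) := by ring
    _ ≤ max A B * 1 := by gcongr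
    _ = max A B := mul_one _
end

section
/- Let f(z) = z + ∑_{n≥2} aₙ zⁿ satisfy ∑_{n≥2} n|aₙ| ≤ 1 (the Hurwitz class H). Then for every λ > 0 and n ≥ 2, |λ aₙ² − a_{2n−1}| ≤ max{λ/n², 1/(2n−1)}. -/
theorem stmt_3 (a : ℕ → ℂ)
    (hsum : Summable (fun n : ℕ => ((n : ℝ) + 2) * ‖a (n + 2)‖))
    (h : ∑' n : ℕ, ((n : ℝ) + 2) * ‖a (n + 2)‖ ≤ 1)
    (lam : ℝ) (hlam : 0 < lam) (n : ℕ) (hn : 2 ≤ n) :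
    ‖(lam : ℂ) * (a n) ^ 2 - a (2 * n - 1)‖ ≤
      max (lam / (n : ℝ) ^ 2) (1 / (2 * (n : ℝ) - 1)) := by
  set r : ℝ := (n : ℝ) with hr
  have hr2 : (2:ℝ) ≤ r := by rw [hr]; exact_mod_cast hn
  have hrpos : (0:ℝ) < r := by linarith
  have h2r : (0:ℝ) < 2*r - 1 := by linarith
  set A := ‖a n‖ with hA
  set B := ‖a (2*n-1)‖ with hB
  have hA0 : 0 ≤ A := norm_nonneg _
  have hB0 : 0 ≤ B := norm_nonneg _
  -- sum of two terms bound
  have hne : n - 2 ≠ 2*n - 3 := by omega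
  have hsum2 : ∑ k ∈ ({n-2, 2*n-3} : Finset ℕ),
      ((k : ℝ) + 2) * ‖a (k + 2)‖ ≤ 1 := by
    refine le_trans (Summable.sum_le_tsum _ (fun k _ => by positivity) hsum) h
  rw [Finset.sum_pair hne] at hsum2
  have e1 : n - 2 + 2 = n := by omega
  have e2 : 2*n - 3 + 2 = 2*n - 1 := by omega
  have c1 : ((n - 2 : ℕ) : ℝ) = r - 2 := by
    rw [hr]; push_cast [Nat.cast_sub hn]; ring
  have c2 : ((2*n - 3 : ℕ) : ℝ) = 2*r - 3 := by
    have h3 : 3 ≤ 2*n := by omega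
    rw [hr]; push_cast [Nat.cast_sub h3]; ring
  rw [e1, e2, c1, c2] at hsum2
  have hpair : r * A + (2*r - 1) * B ≤ 1 := by
    rw [hA, hB]; linarith [hsum2]
  -- triangle inequality
  have htri : ‖(lam : ℂ) * (a n) ^ 2 - a (2 * n - 1)‖ ≤ lam * A^2 + B := by
    have := norm_sub_le ((lam : ℂ) * (a n) ^ 2) (a (2*n-1))
    simp only [norm_mul, norm_pow, Complex.norm_real, Real.norm_eq_abs] at this
    rw [abs_of_pos hlam] at this
    exact this
  refine htri.trans ?_
  set M := max (lam / r ^ 2) (1 / (2 * r - 1)) with hM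
  have hM1 : lam / r^2 ≤ M := le_max_left _ _
  have hM2 : 1 / (2*r - 1) ≤ M := le_max_right _ _
  have hM0 : 0 ≤ M := le_trans (by positivity) hM2
  have hlamM : lam ≤ M * r^2 := by
    rw [div_le_iff₀ (by positivity)] at hM1; linarith
  have h1M : 1 ≤ M * (2*r - 1) := by
    rw [div_le_iff₀ h2r] at hM2; linarith
  have hrA1 : r * A ≤ 1 := by nlinarith
  have k1 : lam * A^2 ≤ M * (r * A) := by nlinarith [sq_nonneg A, mul_nonneg hM0 (mul_nonneg hrpos.le hA0)]
  have k2 : B ≤ M * ((2*r - 1) * B) := by nlinarith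
  have k3 : M * (r * A) + M * ((2*r - 1) * B) ≤ M := by nlinarith
  linarith
end

section
/- Let μ be a probability measure on [0, 2π] and define bₙ = 2∫₀^{2π} e^{inθ} dμ(θ). Then for all integers n, m ≥ 2, |b_{n−1} b_{m−1} − b_{n+m−2}| ≤ 2. -/
open MeasureTheory

theorem stmt_4 (μ : Measure (Set.Icc (0 : ℝ) (2 * Real.pi)))
    [IsProbabilityMeasure μ] (b : ℕ → ℂ)
    (hb : ∀ k : ℕ, b k = 2 * ∫ θ, Complex.exp (Complex.I * k * (θ : ℝ)) ∂μ)
    (n m : ℕ) (hn : 2 ≤ n) (hm : 2 ≤ m) :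
    ‖b (n - 1) * b (m - 1) - b (n + m - 2)‖ ≤ 2 := by
  haveI : CompactSpace (Set.Icc (0 : ℝ) (2 * Real.pi)) :=
    isCompact_iff_compactSpace.mp isCompact_Icc
  set e : ℕ → (Set.Icc (0 : ℝ) (2 * Real.pi)) → ℂ :=
    fun k θ => Complex.exp (Complex.I * k * (θ : ℝ)) with he
  have hcont : ∀ k, Continuous (e k) := by
    intro k
    apply Complex.continuous_exp.comp
    fun_prop
  have hnorm : ∀ k θ, ‖e k θ‖ = 1 := by
    intro k θ
    have h : Complex.I * k * (θ : ℝ) = ((k * (θ : ℝ) : ℝ) : ℂ) * Complex.I := by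
      push_cast; ring
    rw [he]; simp only [h, Complex.norm_exp_ofReal_mul_I]
  have hint : ∀ k, Integrable (e k) μ :=
    fun k => (hcont k).integrable_of_hasCompactSupport (HasCompactSupport.of_compactSpace _)
  have hmem2 : ∀ k, MemLp (e k) 2 μ := fun k =>
    MemLp.of_bound (hcont k).aestronglyMeasurable 1
      (Filter.Eventually.of_forall fun θ => (hnorm k θ).le)
  set p := n - 1 with hp
  set q := m - 1 with hq
  have hpq : n + m - 2 = p + q := by omega
  set A := ∫ θ, e p θ ∂μ with hA
  set B := ∫ θ, e q θ ∂μ with hB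
  set C := ∫ θ, e (p + q) θ ∂μ with hC
  have habs : ∀ k, ‖∫ θ, e k θ ∂μ‖ ≤ 1 := by
    intro k
    calc ‖∫ θ, e k θ ∂μ‖ ≤ ∫ θ, ‖e k θ‖ ∂μ := norm_integral_le_integral_norm _
    _ = 1 := by simp [hnorm]
  -- variance computation
  have hvar : ∀ k, (∫ θ, ‖e k θ - (∫ θ, e k θ ∂μ)‖ ^ 2 ∂μ)
      = 1 - ‖∫ θ, e k θ ∂μ‖ ^ 2 := by
    intro k
    set D := ∫ θ, e k θ ∂μ with hD
    have h1 : ∀ θ, ‖e k θ - D‖ ^ 2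
        = 1 + ‖D‖ ^ 2 - 2 * (e k θ * (starRingEnd ℂ) D).re := by
      intro θ
      have h := Complex.normSq_sub (e k θ) D
      simp only [Complex.normSq_eq_norm_sq] at h
      rw [h, hnorm]; ring
    have iD : Integrable (fun θ => e k θ * (starRingEnd ℂ) D) μ := (hint k).mul_const _
    have iDre : Integrable (fun θ => (e k θ * (starRingEnd ℂ) D).re) μ := iD.re
    have hre : (∫ θ, (e k θ * (starRingEnd ℂ) D).re ∂μ) = (D * (starRingEnd ℂ) D).re := by
      have h := integral_re iD
      simp only [RCLike.re_to_complex] at h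
      rw [h, integral_mul_const, ← hD]
    calc (∫ θ, ‖e k θ - D‖ ^ 2 ∂μ)
        = ∫ θ, (1 + ‖D‖ ^ 2 - 2 * (e k θ * (starRingEnd ℂ) D).re) ∂μ :=
          integral_congr_ae (Filter.Eventually.of_forall fun θ => h1 θ)
      _ = (1 + ‖D‖ ^ 2) - 2 * (∫ θ, (e k θ * (starRingEnd ℂ) D).re ∂μ) := by
          rw [integral_sub (integrable_const _) (iDre.const_mul 2), integral_const,
            integral_const_mul]
          simp
      _ = (1 + ‖D‖ ^ 2) - 2 * (D * (starRingEnd ℂ) D).re := by rw [hre]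
      _ = 1 - ‖D‖ ^ 2 := by
          rw [Complex.mul_conj]
          simp only [Complex.normSq_eq_norm_sq, ← Complex.ofReal_pow,
            Complex.ofReal_re]
          ring
  -- Cauchy-Schwarz
  have hCS : (∫ θ, ‖e p θ - A‖ * ‖e q θ - B‖ ∂μ)
      ≤ Real.sqrt (1 - ‖A‖ ^ 2) * Real.sqrt (1 - ‖B‖ ^ 2) := by
    have h22 : (2 : ℝ).HolderConjugate 2 := Real.HolderConjugate.two_two
    have hF : MemLp (fun θ => ‖e p θ - A‖) (ENNReal.ofReal 2) μ := by
      have h2 : (ENNReal.ofReal 2) = 2 := by norm_num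
      rw [h2]
      exact ((hmem2 p).sub (memLp_const A)).norm
    have hG : MemLp (fun θ => ‖e q θ - B‖) (ENNReal.ofReal 2) μ := by
      have h2 : (ENNReal.ofReal 2) = 2 := by norm_num
      rw [h2]
      exact ((hmem2 q).sub (memLp_const B)).norm
    have hin := integral_mul_le_Lp_mul_Lq_of_nonneg h22
      (Filter.Eventually.of_forall fun θ => norm_nonneg _)
      (Filter.Eventually.of_forall fun θ => norm_nonneg _) hF hG
    calc (∫ θ, ‖e p θ - A‖ * ‖e q θ - B‖ ∂μ)
        ≤ (∫ θ, ‖e p θ - A‖ ^ (2:ℝ) ∂μ) ^ (1/(2:ℝ))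
          * (∫ θ, ‖e q θ - B‖ ^ (2:ℝ) ∂μ) ^ (1/(2:ℝ)) := hin
      _ = Real.sqrt (1 - ‖A‖ ^ 2) * Real.sqrt (1 - ‖B‖ ^ 2) := by
          rw [← Real.sqrt_eq_rpow, ← Real.sqrt_eq_rpow]
          congr 2
          · rw [← hvar p, ← hA]
            refine integral_congr_ae (Filter.Eventually.of_forall fun θ => ?_)
            show ‖e p θ - A‖ ^ (2:ℝ) = ‖e p θ - A‖ ^ 2
            exact Real.rpow_two _
          · rw [← hvar q, ← hB]
            refine integral_congr_ae (Filter.Eventually.of_forall fun θ => ?_)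
            show ‖e q θ - B‖ ^ (2:ℝ) = ‖e q θ - B‖ ^ 2
            exact Real.rpow_two _
  -- covariance identity
  have hcov : (∫ θ, (e p θ - A) * (e q θ - B) ∂μ) = C - A * B := by
    have hmul : ∀ θ, e p θ * e q θ = e (p + q) θ := by
      intro θ
      rw [he, ← Complex.exp_add]
      congr 1
      push_cast
      ring
    have h2 : ∀ θ, (e p θ - A) * (e q θ - B)
        = e (p + q) θ - A * e q θ - B * e p θ + A * B := by
      intro θ; rw [← hmul θ]; ring
    have iAq : Integrable (fun θ => A * e q θ) μ := (hint q).const_mul A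
    have iBp : Integrable (fun θ => B * e p θ) μ := (hint p).const_mul B
    have i1 : Integrable (fun θ => e (p + q) θ - A * e q θ) μ := (hint (p + q)).sub iAq
    have i2 : Integrable (fun θ => e (p + q) θ - A * e q θ - B * e p θ) μ := i1.sub iBp
    calc (∫ θ, (e p θ - A) * (e q θ - B) ∂μ)
        = ∫ θ, (e (p + q) θ - A * e q θ - B * e p θ + A * B) ∂μ :=
          integral_congr_ae (Filter.Eventually.of_forall fun θ => h2 θ)
      _ = C - A * B := by
          rw [integral_add i2 (integrable_const _), integral_sub i1 iBp,
            integral_sub (hint (p + q)) iAq, integral_const_mul, integral_const_mul,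
            integral_const, ← hA, ← hB, ← hC]
          simp only [measure_univ, probReal_univ, ENNReal.toReal_one, one_smul]
          ring
  -- bound on covariance
  have hcovbd : ‖C - A * B‖ ≤ Real.sqrt (1 - ‖A‖ ^ 2) * Real.sqrt (1 - ‖B‖ ^ 2) := by
    rw [← hcov]
    calc ‖∫ θ, (e p θ - A) * (e q θ - B) ∂μ‖
        ≤ ∫ θ, ‖(e p θ - A) * (e q θ - B)‖ ∂μ := norm_integral_le_integral_norm _
      _ = ∫ θ, ‖e p θ - A‖ * ‖e q θ - B‖ ∂μ :=
          integral_congr_ae (Filter.Eventually.of_forall fun θ => norm_mul _ _)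
      _ ≤ _ := hCS
  -- assemble
  have hbn : b p = 2 * A := by rw [hb p]
  have hbm : b q = 2 * B := by rw [hb q]
  have hbc : b (n + m - 2) = 2 * C := by rw [hb (n + m - 2), hpq]
  have key : b p * b q - b (n + m - 2) = 2 * (A * B - (C - A * B)) := by
    rw [hbn, hbm, hbc]; ring
  rw [key]
  have hA1 : ‖A‖ ≤ 1 := habs p
  have hB1 : ‖B‖ ≤ 1 := habs q
  set sa := Real.sqrt (1 - ‖A‖ ^ 2) with hsa
  set sb := Real.sqrt (1 - ‖B‖ ^ 2) with hsb
  have hsa2 : sa ^ 2 = 1 - ‖A‖ ^ 2 := Real.sq_sqrt (by nlinarith [norm_nonneg A])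
  have hsb2 : sb ^ 2 = 1 - ‖B‖ ^ 2 := Real.sq_sqrt (by nlinarith [norm_nonneg B])
  have hfinal : ‖A‖ * ‖B‖ + sa * sb ≤ 1 := by
    nlinarith [sq_nonneg (‖A‖ - ‖B‖), sq_nonneg (sa - sb), Real.sqrt_nonneg (1 - ‖A‖ ^ 2),
      Real.sqrt_nonneg (1 - ‖B‖ ^ 2), norm_nonneg A, norm_nonneg B]
  calc ‖(2:ℂ) * (A * B - (C - A * B))‖ = 2 * ‖A * B - (C - A * B)‖ := by
        rw [norm_mul]; norm_num
    _ ≤ 2 * (‖A‖ * ‖B‖ + sa * sb) := by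
        have h3 : ‖A * B - (C - A * B)‖ ≤ ‖A * B‖ + ‖C - A * B‖ := norm_sub_le _ _
        rw [norm_mul] at h3
        linarith [hcovbd]
    _ ≤ 2 := by linarith
end

section
/- Let μ be a probability measure on [0,2π] and set aₙ = ∫₀^{2π} e^{i(n−1)θ} dμ(θ) for n ≥ 2. Then for all n, m ≥ 2 and all real λ ≥ 2, |λ aₙ aₘ − a_{n+m−1}| ≤ λ − 1. -/
open MeasureTheory

lemma aux_norm_sq_integral {α : Type*} [MeasurableSpace α] (μ : Measure α)
    [IsProbabilityMeasure μ] (f : α → ℂ)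
    (hf1 : ∀ t, ‖f t‖ = 1) (hfi : Integrable f μ) :
    ∫ t, ‖f t - ∫ s, f s ∂μ‖ ^ 2 ∂μ
      = 1 - ‖∫ s, f s ∂μ‖ ^ 2 := by
  set x := ∫ s, f s ∂μ with hx
  have hint : Integrable (fun t => (f t * (starRingEnd ℂ) x).re) μ :=
    Complex.reCLM.integrable_comp (hfi.mul_const _)
  have hre : ∫ t, (f t * (starRingEnd ℂ) x).re ∂μ = ‖x‖ ^ 2 := by
    have h := Complex.reCLM.integral_comp_comm (hfi.mul_const ((starRingEnd ℂ) x))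
    simp only [Complex.reCLM_apply] at h
    rw [h, integral_mul_const, ← hx, Complex.mul_conj]
    norm_cast
    simp [Complex.normSq_eq_norm_sq]
  have hpt : ∀ t, ‖f t - x‖ ^ 2
      = 1 + ‖x‖ ^ 2 - 2 * (f t * (starRingEnd ℂ) x).re := by
    intro t
    rw [← Complex.normSq_eq_norm_sq, Complex.normSq_sub, Complex.normSq_eq_norm_sq,
      Complex.normSq_eq_norm_sq, hf1 t]
    norm_num
  calc ∫ t, ‖f t - x‖ ^ 2 ∂μ
      = ∫ t, (1 + ‖x‖ ^ 2 - 2 * (f t * (starRingEnd ℂ) x).re) ∂μ :=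
        integral_congr_ae (Filter.Eventually.of_forall fun t => hpt t)
    _ = (1 + ‖x‖ ^ 2) - 2 * ∫ t, (f t * (starRingEnd ℂ) x).re ∂μ := by
        rw [integral_sub (integrable_const _) (hint.const_mul 2), integral_const,
          integral_const_mul]
        simp
    _ = 1 - ‖x‖ ^ 2 := by rw [hre]; ring

lemma aux_key {α : Type*} [MeasurableSpace α] (μ : Measure α)
    [IsProbabilityMeasure μ] (f g : α → ℂ)
    (hf : AEStronglyMeasurable f μ) (hg : AEStronglyMeasurable g μ)
    (hf1 : ∀ t, ‖f t‖ = 1) (hg1 : ∀ t, ‖g t‖ = 1)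
    (lam : ℝ) (hlam : 2 ≤ lam) :
    ‖(lam : ℂ) * (∫ s, f s ∂μ) * (∫ s, g s ∂μ) - ∫ s, f s * g s ∂μ‖
      ≤ lam - 1 := by
  have hfn : ∀ t, ‖f t‖ = 1 := fun t => by simp [hf1 t]
  have hgn : ∀ t, ‖g t‖ = 1 := fun t => by simp [hg1 t]
  have hfi : Integrable f μ :=
    (integrable_const (1:ℝ)).mono' hf (Filter.Eventually.of_forall fun t => (hfn t).le)
  have hgi : Integrable g μ :=
    (integrable_const (1:ℝ)).mono' hg (Filter.Eventually.of_forall fun t => (hgn t).le)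
  have hfgi : Integrable (fun t => f t * g t) μ :=
    (integrable_const (1:ℝ)).mono' (hf.mul hg) (Filter.Eventually.of_forall fun t => by
      simp [map_mul, hf1 t, hg1 t])
  set x := ∫ s, f s ∂μ with hx
  set y := ∫ s, g s ∂μ with hy
  set z := ∫ s, f s * g s ∂μ with hz
  have hxle : ‖x‖ ≤ 1 := by
    rw [hx]
    calc ‖∫ s, f s ∂μ‖ ≤ ∫ s, ‖f s‖ ∂μ := norm_integral_le_integral_norm f
      _ = 1 := by simp [hfn]
  have hyle : ‖y‖ ≤ 1 := by
    rw [hy]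
    calc ‖∫ s, g s ∂μ‖ ≤ ∫ s, ‖g s‖ ∂μ := norm_integral_le_integral_norm g
      _ = 1 := by simp [hgn]
  have hfsub : ∀ t, ‖f t - x‖ ≤ 2 := fun t =>
    (norm_sub_le _ _).trans (by
      rw [hfn t]; have := hxle; linarith)
  have hgsub : ∀ t, ‖g t - y‖ ≤ 2 := fun t =>
    (norm_sub_le _ _).trans (by
      rw [hgn t]; have := hyle; linarith)
  -- the product integral identity
  have e1 : Integrable (fun t => x * g t) μ := hgi.const_mul x
  have e2 : Integrable (fun t => f t * y) μ := hfi.mul_const y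
  have e12 : Integrable (fun t => f t * g t - x * g t) μ := hfgi.sub e1
  have e123 : Integrable (fun t => f t * g t - x * g t - f t * y) μ := e12.sub e2
  have h1 : ∫ t, (f t - x) * (g t - y) ∂μ = z - x * y := by
    have hexp : ∀ t, (f t - x) * (g t - y) = f t * g t - x * g t - f t * y + x * y :=
      fun t => by ring
    rw [integral_congr_ae (Filter.Eventually.of_forall hexp),
      integral_add e123 (integrable_const _), integral_sub e12 e2, integral_sub hfgi e1,
      integral_const_mul, integral_mul_const, integral_const]
    simp only [measure_univ, probReal_univ, ENNReal.toReal_one, one_smul, ← hx, ← hy, ← hz]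
    ring
  -- Cauchy-Schwarz
  have hconj : Real.HolderConjugate 2 2 := Real.HolderConjugate.two_two
  have hmemf : MemLp (fun t => ‖f t - x‖) (ENNReal.ofReal 2) μ :=
    memLp_of_bounded (Filter.Eventually.of_forall fun t =>
      Set.mem_Icc.2 ⟨norm_nonneg _, hfsub t⟩)
      ((hf.sub aestronglyMeasurable_const).norm) _
  have hmemg : MemLp (fun t => ‖g t - y‖) (ENNReal.ofReal 2) μ :=
    memLp_of_bounded (Filter.Eventually.of_forall fun t =>
      Set.mem_Icc.2 ⟨norm_nonneg _, hgsub t⟩)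
      ((hg.sub aestronglyMeasurable_const).norm) _
  have hCS := integral_mul_le_Lp_mul_Lq_of_nonneg hconj
    (Filter.Eventually.of_forall fun t => norm_nonneg (f t - x))
    (Filter.Eventually.of_forall fun t => norm_nonneg (g t - y)) hmemf hmemg
  have hif2 : ∫ t, ‖f t - x‖ ^ (2:ℝ) ∂μ = 1 - ‖x‖ ^ 2 := by
    have haux := aux_norm_sq_integral μ f hf1 hfi
    rw [← hx] at haux
    rw [← haux]
    refine integral_congr_ae (Filter.Eventually.of_forall fun t => ?_)
    simp [Real.rpow_two]
  have hig2 : ∫ t, ‖g t - y‖ ^ (2:ℝ) ∂μ = 1 - ‖y‖ ^ 2 := by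
    have haux := aux_norm_sq_integral μ g hg1 hgi
    rw [← hy] at haux
    rw [← haux]
    refine integral_congr_ae (Filter.Eventually.of_forall fun t => ?_)
    simp [Real.rpow_two]
  have h2 : ‖z - x * y‖
      ≤ Real.sqrt (1 - ‖x‖ ^ 2) * Real.sqrt (1 - ‖y‖ ^ 2) := by
    rw [← h1]
    calc ‖∫ t, (f t - x) * (g t - y) ∂μ‖
        ≤ ∫ t, ‖(f t - x) * (g t - y)‖ ∂μ := norm_integral_le_integral_norm _
      _ = ∫ t, ‖f t - x‖ * ‖g t - y‖ ∂μ := by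
          exact integral_congr_ae (Filter.Eventually.of_forall fun t => norm_mul _ _)
      _ ≤ (∫ t, ‖f t - x‖ ^ (2:ℝ) ∂μ) ^ (1/(2:ℝ)) * (∫ t, ‖g t - y‖ ^ (2:ℝ) ∂μ) ^ (1/(2:ℝ)) :=
          hCS
      _ = Real.sqrt (1 - ‖x‖ ^ 2) * Real.sqrt (1 - ‖y‖ ^ 2) := by
          rw [hif2, hig2, Real.sqrt_eq_rpow, Real.sqrt_eq_rpow]
  -- final arithmetic
  have hsplit : ‖(lam:ℂ) * x * y - z‖
      ≤ (lam - 1) * (‖x‖ * ‖y‖) + ‖z - x * y‖ := by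
    have : (lam:ℂ) * x * y - z = ((lam:ℂ) - 1) * (x * y) - (z - x * y) := by ring
    rw [this]
    refine (norm_sub_le _ _).trans ?_
    have : ‖((lam:ℂ) - 1) * (x * y)‖ = (lam - 1) * (‖x‖ * ‖y‖) := by
      rw [norm_mul, norm_mul]
      congr 1
      have : ((lam:ℂ) - 1) = ((lam - 1 : ℝ) : ℂ) := by push_cast; ring
      rw [this, Complex.norm_real, Real.norm_eq_abs, abs_of_nonneg (by linarith)]
    rw [this]
  refine hsplit.trans ?_
  set s := ‖x‖
  set t := ‖y‖
  have hs0 : 0 ≤ s := norm_nonneg _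
  have ht0 : 0 ≤ t := norm_nonneg _
  have hp0 : 0 ≤ Real.sqrt (1 - s ^ 2) := Real.sqrt_nonneg _
  have hq0 : 0 ≤ Real.sqrt (1 - t ^ 2) := Real.sqrt_nonneg _
  have hp2 : Real.sqrt (1 - s ^ 2) ^ 2 = 1 - s ^ 2 := Real.sq_sqrt (by nlinarith)
  have hq2 : Real.sqrt (1 - t ^ 2) ^ 2 = 1 - t ^ 2 := Real.sq_sqrt (by nlinarith)
  have hpq : Real.sqrt (1 - s ^ 2) * Real.sqrt (1 - t ^ 2) ≤ 1 - s * t := by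
    nlinarith [sq_nonneg (s - t), sq_nonneg (Real.sqrt (1 - s ^ 2) - Real.sqrt (1 - t ^ 2)),
      mul_nonneg hp0 hq0, mul_nonneg hs0 ht0]
  have h2' := h2.trans hpq
  have hst : s * t ≤ 1 := by nlinarith
  nlinarith [mul_nonneg (by linarith : (0:ℝ) ≤ lam - 2) (by linarith : (0:ℝ) ≤ 1 - s * t)]

theorem stmt_6 (μ : Measure (Set.Icc (0 : ℝ) (2 * Real.pi)))
    [IsProbabilityMeasure μ] (a : ℕ → ℂ)
    (ha : ∀ k, 2 ≤ k →
      a k = ∫ θ, Complex.exp (Complex.I * ((k : ℂ) - 1) * (θ : ℝ)) ∂μ)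
    (n m : ℕ) (hn : 2 ≤ n) (hm : 2 ≤ m) (lam : ℝ) (hlam : 2 ≤ lam) :
    ‖(lam : ℂ) * a n * a m - a (n + m - 1)‖ ≤ lam - 1 := by
  set f : Set.Icc (0 : ℝ) (2 * Real.pi) → ℂ :=
    fun θ => Complex.exp (Complex.I * ((n : ℂ) - 1) * ((θ : ℝ) : ℂ)) with hfdef
  set g : Set.Icc (0 : ℝ) (2 * Real.pi) → ℂ :=
    fun θ => Complex.exp (Complex.I * ((m : ℂ) - 1) * ((θ : ℝ) : ℂ)) with hgdef
  have hcont : ∀ (c : ℂ), Continuous (fun θ : Set.Icc (0 : ℝ) (2 * Real.pi) =>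
      Complex.exp (Complex.I * c * ((θ : ℝ) : ℂ))) := fun c =>
    Complex.continuous_exp.comp
      (continuous_const.mul (Complex.continuous_ofReal.comp continuous_subtype_val))
  have habs : ∀ (r : ℝ) (θ : Set.Icc (0 : ℝ) (2 * Real.pi)),
      ‖Complex.exp (Complex.I * ((r : ℂ)) * ((θ : ℝ) : ℂ))‖ = 1 := by
    intro r θ
    have : Complex.I * (r : ℂ) * ((θ : ℝ) : ℂ) = ((r * (θ : ℝ) : ℝ) : ℂ) * Complex.I := by
      push_cast; ring
    rw [this, Complex.norm_exp_ofReal_mul_I]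
  have hf1 : ∀ θ, ‖f θ‖ = 1 := by
    intro θ
    have h : ((n : ℂ) - 1) = (((n : ℝ) - 1 : ℝ) : ℂ) := by push_cast; ring
    rw [hfdef]; simp only; rw [h]; exact habs _ θ
  have hg1 : ∀ θ, ‖g θ‖ = 1 := by
    intro θ
    have h : ((m : ℂ) - 1) = (((m : ℝ) - 1 : ℝ) : ℂ) := by push_cast; ring
    rw [hgdef]; simp only; rw [h]; exact habs _ θ
  have han : a n = ∫ θ, f θ ∂μ := ha n hn
  have ham : a m = ∫ θ, g θ ∂μ := ha m hm
  have hanm : a (n + m - 1) = ∫ θ, f θ * g θ ∂μ := by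
    rw [ha (n + m - 1) (by omega)]
    refine integral_congr_ae (Filter.Eventually.of_forall fun θ => ?_)
    rw [hfdef, hgdef]; simp only
    rw [← Complex.exp_add]
    congr 1
    have : ((n + m - 1 : ℕ) : ℂ) = (n : ℂ) + (m : ℂ) - 1 := by
      push_cast [Nat.cast_sub (by omega : 1 ≤ n + m)]; ring
    rw [this]; ring
  rw [han, ham, hanm]
  exact aux_key μ f g (hcont _).aestronglyMeasurable (hcont _).aestronglyMeasurable
    hf1 hg1 lam hlam
end

section
/- Let μ be a probability measure on [0,2π] and set aₙ = ∫₀^{2π} e^{i(n−1)θ} dμ(θ) for n ≥ 2. Then for all n ≥ 2 and λ ≥ 2, |λ aₙ² − a_{2n−1}| ≤ λ − 1. -/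
open MeasureTheory

theorem stmt_7 (μ : Measure (Set.Icc (0 : ℝ) (2 * Real.pi)))
    [IsProbabilityMeasure μ] (a : ℕ → ℂ)
    (ha : ∀ k, 2 ≤ k →
      a k = ∫ θ, Complex.exp (Complex.I * ((k : ℂ) - 1) * (θ : ℝ)) ∂μ)
    (n : ℕ) (hn : 2 ≤ n) (lam : ℝ) (hlam : 2 ≤ lam) :
    ‖(lam : ℂ) * (a n) ^ 2 - a (2 * n - 1)‖ ≤ lam - 1 := by
  set f : Set.Icc (0 : ℝ) (2 * Real.pi) → ℂ :=
    fun θ => Complex.exp (Complex.I * ((n : ℂ) - 1) * ((θ : ℝ) : ℂ)) with hf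
  have hf_cont : Continuous f := by
    apply Complex.continuous_exp.comp
    fun_prop
  have hf_norm : ∀ θ, ‖f θ‖ = 1 := by
    intro θ
    have : Complex.I * ((n : ℂ) - 1) * ((θ : ℝ) : ℂ)
        = ((((n : ℝ) - 1) * (θ : ℝ) : ℝ) : ℂ) * Complex.I := by push_cast; ring
    rw [hf]; simp only [this]
    exact Complex.norm_exp_ofReal_mul_I _
  have hint : Integrable f μ :=
    hf_cont.integrable_of_hasCompactSupport (isClosed_tsupport f).isCompact
  have hint2 : Integrable (fun θ => f θ ^ 2) μ :=
    (hf_cont.pow 2).integrable_of_hasCompactSupport (isClosed_tsupport _).isCompact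
  have hA : a n = ∫ θ, f θ ∂μ := ha n hn
  have hB : a (2 * n - 1) = ∫ θ, f θ ^ 2 ∂μ := by
    rw [ha (2 * n - 1) (by omega)]
    congr 1; funext θ
    have hc : (((2 * n - 1 : ℕ) : ℂ) - 1) = 2 * ((n : ℂ) - 1) := by
      have : (2 * n - 1 : ℕ) = 2 * n - 1 := rfl
      push_cast [Nat.cast_sub (by omega : 1 ≤ 2 * n)]
      ring
    rw [hf, hc, sq, ← Complex.exp_add]
    ring_nf
  set A : ℂ := ∫ θ, f θ ∂μ with hAdef
  have hAle : ‖A‖ ≤ 1 := by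
    calc ‖A‖ ≤ ∫ θ, ‖f θ‖ ∂μ := norm_integral_le_integral_norm _
      _ = 1 := by simp [hf_norm]
  -- variance identity
  have hkey : (∫ θ, f θ ^ 2 ∂μ) - A ^ 2 = ∫ θ, (f θ - A) ^ 2 ∂μ := by
    have h0 : ∀ θ, (f θ - A) ^ 2 = f θ ^ 2 - 2 * A * f θ + A ^ 2 := by intro θ; ring
    have hint3 : Integrable (fun θ => f θ ^ 2 - 2 * A * f θ) μ := by
      exact hint2.sub (hint.const_mul _)
    simp only [h0]
    rw [integral_add hint3 (integrable_const _),
      integral_sub hint2 (hint.const_mul _), integral_const_mul]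
    simp only [integral_const, probReal_univ, one_smul, smul_eq_mul,
      ← hAdef]
    ring
  -- bound on variance
  have hre : ∫ θ, (f θ * (starRingEnd ℂ) A).re ∂μ = Complex.normSq A := by
    rw [show (fun θ => (f θ * (starRingEnd ℂ) A).re) = fun θ => RCLike.re (f θ * (starRingEnd ℂ) A) from rfl]
    rw [integral_re (hint.mul_const _), integral_mul_const, ← hAdef]
    rw [Complex.mul_conj]
    simp
  have hintre : Integrable (fun θ => (f θ * (starRingEnd ℂ) A).re) μ :=
    (Complex.continuous_re.comp ((hf_cont.mul continuous_const))).integrable_of_hasCompactSupport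
      (isClosed_tsupport _).isCompact
  have hnormsq : ∫ θ, ‖f θ - A‖ ^ 2 ∂μ = 1 - ‖A‖ ^ 2 := by
    have hexp : ∀ θ, ‖f θ - A‖ ^ 2 = 1 - 2 * (f θ * (starRingEnd ℂ) A).re + ‖A‖ ^ 2 := by
      intro θ
      have h1 : ‖f θ - A‖ ^ 2 = Complex.normSq (f θ - A) := by
        rw [Complex.sq_norm]
      rw [h1, Complex.normSq_sub]
      have h2 : Complex.normSq (f θ) = 1 := by
        rw [← Complex.sq_norm, hf_norm θ]; norm_num
      rw [h2, ← Complex.sq_norm A]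
      ring
    simp only [hexp]
    have hint4 : Integrable (fun θ => 1 - 2 * (f θ * (starRingEnd ℂ) A).re) μ := by
      exact (integrable_const 1).sub (hintre.const_mul 2)
    rw [integral_add hint4 (integrable_const _),
      integral_sub (integrable_const 1) (hintre.const_mul 2), integral_const_mul, hre]
    simp only [integral_const, probReal_univ, one_smul, smul_eq_mul,
      Complex.normSq_eq_norm_sq]
    ring
  have hvar : ‖(∫ θ, f θ ^ 2 ∂μ) - A ^ 2‖ ≤ 1 - ‖A‖ ^ 2 := by
    rw [hkey]
    calc ‖∫ θ, (f θ - A) ^ 2 ∂μ‖ ≤ ∫ θ, ‖(f θ - A) ^ 2‖ ∂μ := norm_integral_le_integral_norm _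
      _ = ∫ θ, ‖f θ - A‖ ^ 2 ∂μ := by simp [norm_pow]
      _ = 1 - ‖A‖ ^ 2 := hnormsq
  -- final
  have hsplit : (lam : ℂ) * (a n) ^ 2 - a (2 * n - 1)
      = ((lam : ℂ) - 1) * A ^ 2 - ((∫ θ, f θ ^ 2 ∂μ) - A ^ 2) := by
    rw [hA, hB]; ring
  rw [hsplit]
  calc ‖((lam : ℂ) - 1) * A ^ 2 - ((∫ θ, f θ ^ 2 ∂μ) - A ^ 2)‖
      ≤ ‖((lam : ℂ) - 1) * A ^ 2‖ + ‖(∫ θ, f θ ^ 2 ∂μ) - A ^ 2‖ := norm_sub_le _ _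
    _ ≤ (lam - 1) * ‖A‖ ^ 2 + (1 - ‖A‖ ^ 2) := by
        apply add_le_add _ hvar
        rw [norm_mul, norm_pow]
        have : ‖(lam : ℂ) - 1‖ = lam - 1 := by
          rw [show ((lam : ℂ) - 1) = ((lam - 1 : ℝ) : ℂ) by push_cast; ring,
            Complex.norm_real, Real.norm_of_nonneg (by linarith)]
        rw [this]
    _ ≤ lam - 1 := by
        have ht : ‖A‖ ^ 2 ≤ 1 := by nlinarith [norm_nonneg A, hAle]
        nlinarith [ht]
end

section
/- Fix β ∈ [0,1). Let μ be a probability measure on [0,2π] and set aₙ = (2(1−β)/n) ∫₀^{2π} e^{i(n−1)θ} dμ(θ) for n ≥ 2. Then for all n, m ≥ 2 and all real λ ≥ nm/((1−β)(n+m−1)): |λ aₙ aₘ − a_{n+m−1}| ≤ 4λ(1−β)²/(nm) − 2(1−β)/(n+m−1). -/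
open MeasureTheory

lemma cs_aux {α : Type*} [MeasurableSpace α] (μ : Measure α) [IsProbabilityMeasure μ]
    (f g : α → ℂ) (hfm : AEStronglyMeasurable f μ) (hgm : AEStronglyMeasurable g μ)
    (hf1 : ∀ x, ‖f x‖ = 1) (hg1 : ∀ x, ‖g x‖ = 1) :
    ‖(∫ x, f x * g x ∂μ) - (∫ x, f x ∂μ) * (∫ x, g x ∂μ)‖ ≤
      Real.sqrt (1 - ‖∫ x, f x ∂μ‖ ^ 2) * Real.sqrt (1 - ‖∫ x, g x ∂μ‖ ^ 2) := by
  have hfi : Integrable f μ :=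
    (integrable_const (1:ℝ)).mono' hfm (Filter.Eventually.of_forall fun x => (hf1 x).le)
  have hgi : Integrable g μ :=
    (integrable_const (1:ℝ)).mono' hgm (Filter.Eventually.of_forall fun x => (hg1 x).le)
  have hfgi : Integrable (fun x => f x * g x) μ := by
    refine (integrable_const (1:ℝ)).mono' (hfm.mul hgm) (Filter.Eventually.of_forall fun x => ?_)
    rw [norm_mul, hf1 x, hg1 x]; norm_num
  set I := ∫ x, f x ∂μ with hI
  set J := ∫ x, g x ∂μ with hJ
  -- second moment computation
  have hsq : ∀ (h : α → ℂ) (hi : Integrable h μ) (h1 : ∀ x, ‖h x‖ = 1),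
      ∫ x, ‖h x - (∫ y, h y ∂μ)‖ ^ 2 ∂μ = 1 - ‖∫ y, h y ∂μ‖ ^ 2 := by
    intro h hi h1
    set H := ∫ y, h y ∂μ with hH
    have hpt : ∀ x, ‖h x - H‖ ^ 2
        = 1 + Complex.normSq H - 2 * (h x * (starRingEnd ℂ) H).re := by
      intro x
      have : ‖h x - H‖ ^ 2 = Complex.normSq (h x - H) := by
        rw [← Complex.sq_norm]
      rw [this, Complex.normSq_sub]
      have : Complex.normSq (h x) = 1 := by
        have := h1 x
        rw [← Complex.sq_norm]
        rw [this]; norm_num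
      rw [this]
    rw [integral_congr_ae (Filter.Eventually.of_forall hpt)]
    have hint1 : Integrable (fun x => (h x * (starRingEnd ℂ) H).re) μ :=
      (hi.mul_const _).re
    have hint2 : Integrable (fun x => 2 * (h x * (starRingEnd ℂ) H).re) μ :=
      hint1.const_mul 2
    have hre : ∫ x, (h x * (starRingEnd ℂ) H).re ∂μ
        = (∫ x, h x * (starRingEnd ℂ) H ∂μ).re := integral_re (hi.mul_const _)
    rw [integral_sub (integrable_const _) hint2, integral_const,
      integral_const_mul, hre, integral_mul_const, ← hH, Complex.mul_conj]
    simp only [measure_univ, probReal_univ, ENNReal.toReal_one, one_smul, Complex.ofReal_re, Complex.sq_norm]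
    ring
  -- expansion
  have hexp : (∫ x, (f x - I) * (g x - J) ∂μ) = (∫ x, f x * g x ∂μ) - I * J := by
    have hpt : ∀ x, (f x - I) * (g x - J)
        = f x * g x - (f x * J + I * g x - I * J) := fun x => by ring
    have i1 : Integrable (fun x => f x * J) μ := hfi.mul_const J
    have i2 : Integrable (fun x => I * g x) μ := hgi.const_mul I
    have i3 : Integrable (fun x => f x * J + I * g x) μ := i1.add i2
    have i4 : Integrable (fun x => f x * J + I * g x - I * J) μ := i3.sub (integrable_const _)
    rw [integral_congr_ae (Filter.Eventually.of_forall hpt),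
      integral_sub hfgi i4, integral_sub i3 (integrable_const _),
      integral_add i1 i2, integral_mul_const, integral_const_mul, integral_const]
    simp [← hI, ← hJ]
  -- Cauchy–Schwarz
  have hFb : ∀ x, ‖f x - I‖ ≤ 2 := by
    intro x
    calc ‖f x - I‖ ≤ ‖f x‖ + ‖I‖ := norm_sub_le _ _
    _ ≤ 1 + 1 := by
        refine add_le_add (hf1 x).le ?_
        calc ‖I‖ ≤ ∫ x, ‖f x‖ ∂μ := norm_integral_le_integral_norm _
        _ = 1 := by simp [hf1]
    _ = 2 := by norm_num
  have hGb : ∀ x, ‖g x - J‖ ≤ 2 := by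
    intro x
    calc ‖g x - J‖ ≤ ‖g x‖ + ‖J‖ := norm_sub_le _ _
    _ ≤ 1 + 1 := by
        refine add_le_add (hg1 x).le ?_
        calc ‖J‖ ≤ ∫ x, ‖g x‖ ∂μ := norm_integral_le_integral_norm _
        _ = 1 := by simp [hg1]
    _ = 2 := by norm_num
  have hFm : AEStronglyMeasurable (fun x => ‖f x - I‖) μ := (hfm.sub aestronglyMeasurable_const).norm
  have hGm : AEStronglyMeasurable (fun x => ‖g x - J‖) μ := (hgm.sub aestronglyMeasurable_const).norm
  have hconj : (2:ℝ).HolderConjugate 2 := Real.holderConjugate_iff.mpr ⟨one_lt_two, by norm_num⟩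
  have hFL : MemLp (fun x => ‖f x - I‖) (ENNReal.ofReal 2) μ :=
    (memLp_top_of_bound hFm 2 (Filter.Eventually.of_forall fun x => by
      simpa using hFb x)).mono_exponent le_top
  have hGL : MemLp (fun x => ‖g x - J‖) (ENNReal.ofReal 2) μ :=
    (memLp_top_of_bound hGm 2 (Filter.Eventually.of_forall fun x => by
      simpa using hGb x)).mono_exponent le_top
  have holder := integral_mul_le_Lp_mul_Lq_of_nonneg hconj
    (Filter.Eventually.of_forall fun x => norm_nonneg (f x - I))
    (Filter.Eventually.of_forall fun x => norm_nonneg (g x - J)) hFL hGL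
  calc ‖(∫ x, f x * g x ∂μ) - I * J‖ = ‖∫ x, (f x - I) * (g x - J) ∂μ‖ := by rw [hexp]
  _ ≤ ∫ x, ‖(f x - I) * (g x - J)‖ ∂μ := norm_integral_le_integral_norm _
  _ = ∫ x, ‖f x - I‖ * ‖g x - J‖ ∂μ := by simp [norm_mul]
  _ ≤ (∫ x, ‖f x - I‖ ^ (2:ℝ) ∂μ) ^ ((1:ℝ)/2) * (∫ x, ‖g x - J‖ ^ (2:ℝ) ∂μ) ^ ((1:ℝ)/2) := holder
  _ = Real.sqrt (1 - ‖I‖ ^ 2) * Real.sqrt (1 - ‖J‖ ^ 2) := by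
      have e1 : ∀ x, ‖f x - I‖ ^ (2:ℝ) = ‖f x - I‖ ^ 2 := fun x => by
        rw [← Real.rpow_natCast]; norm_num
      have e2 : ∀ x, ‖g x - J‖ ^ (2:ℝ) = ‖g x - J‖ ^ 2 := fun x => by
        rw [← Real.rpow_natCast]; norm_num
      have hf' : ∫ x, ‖f x - I‖ ^ 2 ∂μ = 1 - ‖I‖ ^ 2 := hsq f hfi hf1
      have hg' : ∫ x, ‖g x - J‖ ^ 2 ∂μ = 1 - ‖J‖ ^ 2 := hsq g hgi hg1
      simp_rw [e1, e2, hf', hg']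
      rw [Real.sqrt_eq_rpow, Real.sqrt_eq_rpow]

lemma alg_aux (A B : ℝ) (I J K : ℂ) (hIn : ‖I‖ ≤ 1) (hJn : ‖J‖ ≤ 1)
    (hK : ‖K - I * J‖ ≤ Real.sqrt (1 - ‖I‖ ^ 2) * Real.sqrt (1 - ‖J‖ ^ 2))
    (hB : 0 < B) (hAB : 2 * B ≤ A) :
    ‖(A : ℂ) * (I * J) - (B : ℂ) * K‖ ≤ A - B := by
  have h1 : (A : ℂ) * (I * J) - (B : ℂ) * K
      = (((A - B : ℝ)) : ℂ) * (I * J) - (B : ℂ) * (K - I * J) := by push_cast; ring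
  rw [h1]
  set x := ‖I‖; set y := ‖J‖
  have hx0 : 0 ≤ x := norm_nonneg _
  have hy0 : 0 ≤ y := norm_nonneg _
  have hx2 : 0 ≤ 1 - x ^ 2 := by nlinarith
  have hy2 : 0 ≤ 1 - y ^ 2 := by nlinarith
  set u := Real.sqrt (1 - x ^ 2) with hu
  set v := Real.sqrt (1 - y ^ 2) with hv
  have hu0 : 0 ≤ u := Real.sqrt_nonneg _
  have hv0 : 0 ≤ v := Real.sqrt_nonneg _
  have hu2 : u ^ 2 = 1 - x ^ 2 := Real.sq_sqrt hx2
  have hv2 : v ^ 2 = 1 - y ^ 2 := Real.sq_sqrt hy2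
  have huv : u * v ≤ 1 - x * y := by nlinarith [sq_nonneg (u - v), sq_nonneg (x - y)]
  have hxy1 : x * y ≤ 1 := by nlinarith [mul_nonneg hu0 hv0]
  calc ‖(((A - B : ℝ)) : ℂ) * (I * J) - (B : ℂ) * (K - I * J)‖
      ≤ ‖(((A - B : ℝ)) : ℂ) * (I * J)‖ + ‖(B : ℂ) * (K - I * J)‖ := norm_sub_le _ _
    _ = (A - B) * (x * y) + B * ‖K - I * J‖ := by
        rw [norm_mul, norm_mul, norm_mul, Complex.norm_real, Complex.norm_real,
          Real.norm_of_nonneg (by linarith), Real.norm_of_nonneg hB.le]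
    _ ≤ (A - B) * (x * y) + B * (1 - x * y) := by
        have h3 : B * ‖K - I * J‖ ≤ B * (u * v) := mul_le_mul_of_nonneg_left hK hB.le
        have h4 : B * (u * v) ≤ B * (1 - x * y) := mul_le_mul_of_nonneg_left huv hB.le
        linarith
    _ ≤ A - B := by
        nlinarith [mul_nonneg (show (0:ℝ) ≤ A - 2 * B by linarith)
          (show (0:ℝ) ≤ 1 - x * y by linarith)]

theorem stmt_8 (β : ℝ) (hβ0 : 0 ≤ β) (hβ1 : β < 1)
    (μ : Measure (Set.Icc (0 : ℝ) (2 * Real.pi))) [IsProbabilityMeasure μ]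
    (a : ℕ → ℂ)
    (ha : ∀ k, 2 ≤ k →
      a k = ((2 * (1 - β) / k : ℝ) : ℂ) *
        ∫ θ, Complex.exp (Complex.I * ((k : ℂ) - 1) * (θ : ℝ)) ∂μ)
    (n m : ℕ) (hn : 2 ≤ n) (hm : 2 ≤ m) (lam : ℝ)
    (hlam : (n : ℝ) * m / ((1 - β) * ((n : ℝ) + m - 1)) ≤ lam) :
    ‖(lam : ℂ) * a n * a m - a (n + m - 1)‖ ≤
      4 * lam * (1 - β) ^ 2 / ((n : ℝ) * m) - 2 * (1 - β) / ((n : ℝ) + m - 1) := by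
  have hβ : (0 : ℝ) < 1 - β := by linarith
  have hN : (2 : ℝ) ≤ (n : ℝ) := by exact_mod_cast hn
  have hM : (2 : ℝ) ≤ (m : ℝ) := by exact_mod_cast hm
  have hNM : (0 : ℝ) < (n : ℝ) * m := by nlinarith
  have hS : (0 : ℝ) < (n : ℝ) + m - 1 := by linarith
  have hcont : ∀ c : ℂ,
      Continuous fun θ : Set.Icc (0 : ℝ) (2 * Real.pi) => Complex.exp (Complex.I * c * (θ : ℝ)) :=
    fun c => Complex.continuous_exp.comp
      (continuous_const.mul (Complex.continuous_ofReal.comp continuous_subtype_val))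
  have hnorm1 : ∀ (k : ℕ) (θ : Set.Icc (0 : ℝ) (2 * Real.pi)),
      ‖Complex.exp (Complex.I * ((k : ℂ) - 1) * (θ : ℝ))‖ = 1 := by
    intro k θ
    rw [Complex.norm_exp]
    have : (Complex.I * ((k : ℂ) - 1) * ((θ : ℝ) : ℂ)).re = 0 := by
      simp [Complex.mul_re, Complex.mul_im]
    rw [this, Real.exp_zero]
  have hcast : ((n + m - 1 : ℕ) : ℂ) = (n : ℂ) + (m : ℂ) - 1 := by
    push_cast [Nat.cast_sub (by omega : 1 ≤ n + m)]
    ring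
  have hprod : ∀ θ : Set.Icc (0 : ℝ) (2 * Real.pi),
      Complex.exp (Complex.I * ((n : ℂ) - 1) * (θ : ℝ))
        * Complex.exp (Complex.I * ((m : ℂ) - 1) * (θ : ℝ))
      = Complex.exp (Complex.I * (((n + m - 1 : ℕ) : ℂ) - 1) * (θ : ℝ)) := by
    intro θ
    rw [← Complex.exp_add, hcast]
    congr 1
    ring
  rw [ha n hn, ha m hm, ha (n + m - 1) (by omega)]
  set I := ∫ θ, Complex.exp (Complex.I * ((n : ℂ) - 1) * (θ : ℝ)) ∂μ with hI
  set J := ∫ θ, Complex.exp (Complex.I * ((m : ℂ) - 1) * (θ : ℝ)) ∂μ with hJ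
  set K := ∫ θ, Complex.exp (Complex.I * (((n + m - 1 : ℕ) : ℂ) - 1) * (θ : ℝ)) ∂μ with hK
  have hIle : ‖I‖ ≤ 1 := by
    calc ‖I‖ ≤ ∫ θ, ‖Complex.exp (Complex.I * ((n : ℂ) - 1) * (θ : ℝ))‖ ∂μ :=
          norm_integral_le_integral_norm _
    _ = 1 := by simp only [hnorm1]; simp
  have hJle : ‖J‖ ≤ 1 := by
    calc ‖J‖ ≤ ∫ θ, ‖Complex.exp (Complex.I * ((m : ℂ) - 1) * (θ : ℝ))‖ ∂μ :=
          norm_integral_le_integral_norm _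
    _ = 1 := by simp only [hnorm1]; simp
  have hcs : ‖K - I * J‖ ≤ Real.sqrt (1 - ‖I‖ ^ 2) * Real.sqrt (1 - ‖J‖ ^ 2) := by
    have hKfg : K = ∫ θ, Complex.exp (Complex.I * ((n : ℂ) - 1) * (θ : ℝ))
        * Complex.exp (Complex.I * ((m : ℂ) - 1) * (θ : ℝ)) ∂μ := by
      rw [hK]
      exact (integral_congr_ae (Filter.Eventually.of_forall hprod)).symm
    rw [hKfg]
    exact cs_aux μ _ _ (hcont _).aestronglyMeasurable (hcont _).aestronglyMeasurable
      (hnorm1 n) (hnorm1 m)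
  set A : ℝ := 4 * lam * (1 - β) ^ 2 / ((n : ℝ) * m) with hA
  set B : ℝ := 2 * (1 - β) / ((n : ℝ) + m - 1) with hB
  have hBpos : 0 < B := by rw [hB]; positivity
  have hAB : 2 * B ≤ A := by
    have hstep := mul_le_mul_of_nonneg_left hlam
      (show (0 : ℝ) ≤ 4 * (1 - β) ^ 2 / ((n : ℝ) * m) by positivity)
    have h1 : (1 - β) ≠ 0 := ne_of_gt hβ
    have h2 : ((n : ℝ) * m) ≠ 0 := ne_of_gt hNM
    have h3 : ((n : ℝ) + m - 1) ≠ 0 := ne_of_gt hS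
    calc 2 * B = 4 * (1 - β) ^ 2 / ((n : ℝ) * m)
          * ((n : ℝ) * m / ((1 - β) * ((n : ℝ) + m - 1))) := by
          rw [hB]; field_simp; ring
      _ ≤ 4 * (1 - β) ^ 2 / ((n : ℝ) * m) * lam := hstep
      _ = A := by rw [hA]; ring
  have hgoal : (lam : ℂ) * (((2 * (1 - β) / n : ℝ) : ℂ) * I) * (((2 * (1 - β) / m : ℝ) : ℂ) * J)
      - ((2 * (1 - β) / ((n + m - 1 : ℕ) : ℝ) : ℝ) : ℂ) * K
      = (A : ℂ) * (I * J) - (B : ℂ) * K := by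
    have hc2 : ((n + m - 1 : ℕ) : ℝ) = (n : ℝ) + m - 1 := by
      push_cast [Nat.cast_sub (by omega : 1 ≤ n + m)]
      ring
    rw [hc2, hA, hB]
    have h2 : ((n : ℝ) : ℂ) ≠ 0 := by
      simp only [ne_eq, Complex.ofReal_eq_zero]
      positivity
    have h3 : ((m : ℝ) : ℂ) ≠ 0 := by
      simp only [ne_eq, Complex.ofReal_eq_zero]
      positivity
    have h4 : (((n : ℝ) + m - 1 : ℝ) : ℂ) ≠ 0 := by
      simp only [ne_eq, Complex.ofReal_eq_zero]
      exact ne_of_gt hS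
    push_cast
    field_simp
    ring
  rw [hgoal]
  exact alg_aux A B I J K hIle hJle hcs hBpos hAB
end

section
/- Fix β ∈ [0,1). Let μ be a probability measure on [0,2π] and set aₙ = (2(1−β)/n) ∫₀^{2π} e^{i(n−1)θ} dμ(θ) for n ≥ 2. Then for all n ≥ 2 and λ ≥ n²/((2n−1)(1−β)): |λ aₙ² − a_{2n−1}| ≤ 4λ(1−β)²/n² − 2(1−β)/(2n−1). -/
open MeasureTheory

lemma my_integrable {E : Type*} [NormedAddCommGroup E]
    (μ : Measure (Set.Icc (0 : ℝ) (2 * Real.pi))) [IsProbabilityMeasure μ]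
    (f : (Set.Icc (0 : ℝ) (2 * Real.pi)) → E) (hf : Continuous f) :
    Integrable f μ := by
  haveI : CompactSpace (Set.Icc (0 : ℝ) (2 * Real.pi)) :=
    isCompact_iff_compactSpace.mp isCompact_Icc
  exact hf.integrable_of_hasCompactSupport (isClosed_tsupport f).isCompact

theorem stmt_9 (β : ℝ) (hβ0 : 0 ≤ β) (hβ1 : β < 1)
    (μ : Measure (Set.Icc (0 : ℝ) (2 * Real.pi))) [IsProbabilityMeasure μ]
    (a : ℕ → ℂ)
    (ha : ∀ k, 2 ≤ k →
      a k = ((2 * (1 - β) / k : ℝ) : ℂ) *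
        ∫ θ, Complex.exp (Complex.I * ((k : ℂ) - 1) * (θ : ℝ)) ∂μ)
    (n : ℕ) (hn : 2 ≤ n) (lam : ℝ)
    (hlam : (n : ℝ) ^ 2 / ((2 * (n : ℝ) - 1) * (1 - β)) ≤ lam) :
    ‖(lam : ℂ) * (a n) ^ 2 - a (2 * n - 1)‖ ≤
      4 * lam * (1 - β) ^ 2 / (n : ℝ) ^ 2 - 2 * (1 - β) / (2 * (n : ℝ) - 1) := by
  have hβ : 0 < 1 - β := by linarith
  have hn2 : (2 : ℝ) ≤ (n : ℝ) := by exact_mod_cast hn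
  have hnpos : (0 : ℝ) < (n : ℝ) := by linarith
  have h2n1 : (0 : ℝ) < 2 * (n : ℝ) - 1 := by linarith
  -- the basic oscillation function
  set g : (Set.Icc (0 : ℝ) (2 * Real.pi)) → ℂ :=
    fun θ => Complex.exp (Complex.I * ((n : ℂ) - 1) * ((θ : ℝ) : ℂ)) with hg
  have hgcont : Continuous g := by
    apply Complex.continuous_exp.comp
    exact (continuous_const.mul (Complex.continuous_ofReal.comp continuous_subtype_val))
  have hgabs : ∀ θ, ‖g θ‖ = 1 := by
    intro θ
    have : Complex.I * ((n : ℂ) - 1) * ((θ : ℝ) : ℂ)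
        = ((((n : ℝ) - 1) * (θ : ℝ) : ℝ) : ℂ) * Complex.I := by push_cast; ring
    rw [hg]; dsimp only; rw [this, Complex.norm_exp_ofReal_mul_I]
  have hgint : Integrable g μ := my_integrable μ g hgcont
  have hg2int : Integrable (fun θ => (g θ) ^ 2) μ := my_integrable μ _ (hgcont.pow 2)
  set I1 : ℂ := ∫ θ, g θ ∂μ with hI1
  set I2 : ℂ := ∫ θ, (g θ) ^ 2 ∂μ with hI2
  -- |I1| ≤ 1
  have habsI1 : ‖I1‖ ≤ 1 := by
    rw [hI1]
    calc ‖∫ θ, g θ ∂μ‖ ≤ ∫ θ, ‖g θ‖ ∂μ :=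
          norm_integral_le_integral_norm g
      _ = 1 := by simp [hgabs]
  -- variance identity
  have hvar : I2 - I1 ^ 2 = ∫ θ, (g θ - I1) ^ 2 ∂μ := by
    have : (fun θ => (g θ - I1) ^ 2)
        = fun θ => ((g θ) ^ 2 - 2 * I1 * g θ) + I1 ^ 2 := by
      funext θ; ring
    rw [this, integral_add (by exact hg2int.sub ((hgint.const_mul _)))
      (integrable_const _), integral_sub hg2int (hgint.const_mul _),
      integral_const_mul, integral_const]
    simp [← hI1, ← hI2]
    ring
  -- bound on the variance
  have hvarbound : ‖I2 - I1 ^ 2‖ ≤ 1 - ‖I1‖ ^ 2 := by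
    rw [hvar]
    calc ‖∫ θ, (g θ - I1) ^ 2 ∂μ‖
        ≤ ∫ θ, ‖(g θ - I1) ^ 2‖ ∂μ := by
          exact norm_integral_le_integral_norm _
      _ = ∫ θ, Complex.normSq (g θ - I1) ∂μ := by
          congr 1; funext θ
          rw [norm_pow, ← Complex.sq_norm]
      _ = 1 - ‖I1‖ ^ 2 := by
          have hexp : (fun θ => Complex.normSq (g θ - I1))
              = fun θ => (Complex.normSq (g θ) + Complex.normSq I1)
                  - 2 * (g θ * (starRingEnd ℂ) I1).re := by
            funext θ; rw [Complex.normSq_sub]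
          rw [hexp, integral_sub, integral_add, integral_const_mul]
          · have h1 : ∫ θ, Complex.normSq (g θ) ∂μ = 1 := by
              have : (fun θ => Complex.normSq (g θ)) = fun _ => (1 : ℝ) := by
                funext θ; rw [← Complex.sq_norm, hgabs]; norm_num
              rw [this]; simp
            have h2 : ∫ θ, Complex.normSq I1 ∂μ = Complex.normSq I1 := by simp
            have h3 : ∫ θ, (g θ * (starRingEnd ℂ) I1).re ∂μ = Complex.normSq I1 := by
              have : ∫ θ, g θ * (starRingEnd ℂ) I1 ∂μ = I1 * (starRingEnd ℂ) I1 :=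
                integral_mul_const _ g
              have hre : ∫ θ, (g θ * (starRingEnd ℂ) I1).re ∂μ
                  = (∫ θ, g θ * (starRingEnd ℂ) I1 ∂μ).re :=
                integral_re (hgint.mul_const _)
              rw [hre, this, Complex.mul_conj]
              simp
            rw [h1, h2, h3, ← Complex.sq_norm]
            ring
          · exact my_integrable μ _ (Complex.continuous_normSq.comp hgcont)
          · exact integrable_const _
          · exact ((my_integrable μ _ ((Complex.continuous_normSq.comp
              hgcont))).add (integrable_const _))
          · exact (my_integrable μ _
              (Complex.continuous_re.comp (hgcont.mul continuous_const))).const_mul _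
  -- identify the coefficients
  have han : a n = ((2 * (1 - β) / n : ℝ) : ℂ) * I1 := ha n hn
  have ha2n : a (2 * n - 1) = ((2 * (1 - β) / (2 * (n : ℝ) - 1) : ℝ) : ℂ) * I2 := by
    rw [ha (2 * n - 1) (by omega)]
    have hcast : ((2 * n - 1 : ℕ) : ℂ) = 2 * (n : ℂ) - 1 := by
      have : (1 : ℕ) ≤ 2 * n := by omega
      push_cast [Nat.cast_sub this]; ring
    have hcastR : ((2 * n - 1 : ℕ) : ℝ) = 2 * (n : ℝ) - 1 := by
      have : (1 : ℕ) ≤ 2 * n := by omega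
      push_cast [Nat.cast_sub this]; ring
    rw [hcast, hcastR]
    congr 1
    rw [hI2]
    congr 1; funext θ
    rw [hg]; dsimp only
    rw [← Complex.exp_nat_mul]
    congr 1
    push_cast; ring
  -- real constfrom
  set c : ℝ := 2 * (1 - β) with hc
  have hcpos : 0 < c := by rw [hc]; linarith
  set A : ℝ := lam * c ^ 2 / (n : ℝ) ^ 2 with hA
  set B : ℝ := c / (2 * (n : ℝ) - 1) with hB
  have hBpos : 0 < B := div_pos hcpos h2n1
  have hlam' : (n : ℝ) ^ 2 ≤ lam * ((2 * (n : ℝ) - 1) * (1 - β)) := by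
    rw [div_le_iff₀ (mul_pos h2n1 hβ)] at hlam; linarith
  have hA2B : 2 * B ≤ A := by
    rw [hA, hB, hc]
    have h4 : 2 * (2 * (1 - β) / (2 * (n : ℝ) - 1))
        = (4 * (1 - β)) / (2 * (n : ℝ) - 1) := by ring
    rw [h4, div_le_div_iff₀ h2n1 (pow_pos hnpos 2)]
    nlinarith [sq_nonneg (n : ℝ)]
  -- rewrite the target
  have hLHS : (lam : ℂ) * (a n) ^ 2 - a (2 * n - 1)
      = ((A - B : ℝ) : ℂ) * I1 ^ 2 + ((B : ℝ) : ℂ) * (I1 ^ 2 - I2) := by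
    rw [han, ha2n, hA, hB, hc]
    have hne : ((n : ℝ) : ℂ) ≠ 0 := by
      exact_mod_cast ne_of_gt hnpos
    have hne2 : ((2 * (n : ℝ) - 1 : ℝ) : ℂ) ≠ 0 := by
      exact_mod_cast ne_of_gt h2n1
    push_cast
    field_simp
    ring
  rw [hLHS]
  have hRHS : 4 * lam * (1 - β) ^ 2 / (n : ℝ) ^ 2 - 2 * (1 - β) / (2 * (n : ℝ) - 1)
      = A - B := by rw [hA, hB, hc]; ring
  rw [hRHS]
  have hABnn : 0 ≤ A - B := by linarith
  calc ‖((A - B : ℝ) : ℂ) * I1 ^ 2 + ((B : ℝ) : ℂ) * (I1 ^ 2 - I2)‖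
      ≤ ‖((A - B : ℝ) : ℂ) * I1 ^ 2‖
        + ‖((B : ℝ) : ℂ) * (I1 ^ 2 - I2)‖ := norm_add_le _ _
    _ = (A - B) * ‖I1‖ ^ 2 + B * ‖I2 - I1 ^ 2‖ := by
        rw [norm_mul, norm_mul, Complex.norm_real, Complex.norm_real, Real.norm_eq_abs,
          Real.norm_eq_abs, abs_of_nonneg hABnn, abs_of_nonneg hBpos.le, norm_pow,
          ← norm_neg (I1 ^ 2 - I2)]
        ring_nf
    _ ≤ (A - B) * ‖I1‖ ^ 2 + B * (1 - ‖I1‖ ^ 2) := by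
        have := mul_le_mul_of_nonneg_left hvarbound hBpos.le
        linarith
    _ = B + (A - 2 * B) * ‖I1‖ ^ 2 := by ring
    _ ≤ B + (A - 2 * B) * 1 := by
        have h1 : ‖I1‖ ^ 2 ≤ 1 := by nlinarith [norm_nonneg I1]
        nlinarith
    _ = A - B := by ring
end

section
/- Fix β ∈ [0,1) and n ≥ 2. If a probability measure μ on [0,2π] gives coefficients aₙ = (2(1−β)/n)∫₀^{2π} e^{i(n−1)θ}dμ(θ) and a_{2n−1} = (2(1−β)/(2n−1))∫₀^{2π} e^{i(2n−2)θ}dμ(θ), then for 0 < λ ≤ 4/(3(1−β)): |λ aₙ² − a_{2n−1}| ≤ 2(1−β)/(2n−1). -/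
open MeasureTheory

lemma aux_bound {α : Type*} [MeasurableSpace α] (μ : Measure α) [IsProbabilityMeasure μ]
    (g : α → ℂ) (hg : AEStronglyMeasurable g μ) (hgu : ∀ x, ‖g x‖ = 1)
    (t : ℝ) (ht0 : 0 ≤ t) (ht2 : t ≤ 2) :
    ‖(t : ℂ) * (∫ x, g x ∂μ) ^ 2 - ∫ x, (g x) ^ 2 ∂μ‖ ≤ 1 := by
  have hgi : Integrable g μ := by
    refine ⟨hg, HasFiniteIntegral.of_bounded (C := 1) (Filter.Eventually.of_forall fun x => ?_)⟩
    simp [hgu x]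
  have hg2i : Integrable (fun x => (g x) ^ 2) μ := by
    refine ⟨((hg.mul hg).congr (Filter.Eventually.of_forall fun x => by
        simp [Pi.mul_apply, sq])),
      HasFiniteIntegral.of_bounded (C := 1) (Filter.Eventually.of_forall fun x => ?_)⟩
    simp [hgu x]
  set m : ℂ := ∫ x, g x ∂μ with hm
  set S : ℂ := ∫ x, (g x) ^ 2 ∂μ with hS
  have hmle : ‖m‖ ≤ 1 := by
    calc ‖m‖ = ‖∫ x, g x ∂μ‖ := rfl
      _ ≤ ∫ x, ‖g x‖ ∂μ := norm_integral_le_integral_norm g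
      _ = 1 := by simp [hgu]
  have hi2 : Integrable (fun x => (2 * m) * g x) μ := hgi.const_mul (2 * m)
  have hi1 : Integrable (fun x => (g x) ^ 2 - (2 * m) * g x) μ := hg2i.sub hi2
  have h1 : ∫ x, (g x - m) ^ 2 ∂μ = S - m ^ 2 := by
    have heq : ∀ x, (g x - m) ^ 2 = ((g x) ^ 2 - (2 * m) * g x) + m ^ 2 := by
      intro x; ring
    rw [integral_congr_ae (Filter.Eventually.of_forall heq),
      integral_add hi1 (integrable_const _), integral_sub hg2i hi2,
      integral_const_mul, integral_const]
    simp only [probReal_univ, one_smul, ← hm, ← hS]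
    ring
  have hgmi : Integrable (fun x => (g x - m) ^ 2) μ := by
    refine (hi1.add (integrable_const (m ^ 2))).congr
      (Filter.Eventually.of_forall fun x => ?_)
    simp only [Pi.add_apply]
    ring
  have hconji : Integrable (fun x => g x * (starRingEnd ℂ) m) μ := hgi.mul_const _
  have hmm : (m * (starRingEnd ℂ) m).re = Complex.normSq m := by
    rw [Complex.mul_conj, Complex.ofReal_re]
  have h2 : ∫ x, Complex.normSq (g x - m) ∂μ = 1 - Complex.normSq m := by
    have heq : ∀ x, Complex.normSq (g x - m) =
        1 + Complex.normSq m - 2 * (g x * (starRingEnd ℂ) m).re := by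
      intro x
      have h1x : Complex.normSq (g x) = 1 := by
        rw [← Complex.sq_norm, hgu x]; norm_num
      rw [Complex.normSq_sub, h1x]
      try ring
    have hint2 : Integrable (fun x => 2 * (g x * (starRingEnd ℂ) m).re) μ :=
      (hconji.re).const_mul 2
    have hre : ∫ x, (g x * (starRingEnd ℂ) m).re ∂μ = Complex.normSq m := by
      have h := integral_re (𝕜 := ℂ) hconji
      simp only [RCLike.re_to_complex] at h
      rw [h, integral_mul_const, ← hm, hmm]
    rw [integral_congr_ae (Filter.Eventually.of_forall heq),
      integral_sub (integrable_const _) hint2, integral_const, integral_const_mul, hre]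
    simp only [probReal_univ, one_smul]
    ring
  have h3 : ‖S - m ^ 2‖ ≤ 1 - Complex.normSq m := by
    rw [← h1]
    calc ‖∫ x, (g x - m) ^ 2 ∂μ‖
        = ‖∫ x, (g x - m) ^ 2 ∂μ‖ := rfl
      _ ≤ ∫ x, ‖(g x - m) ^ 2‖ ∂μ := norm_integral_le_integral_norm _
      _ = ∫ x, Complex.normSq (g x - m) ∂μ := by
          refine integral_congr_ae (Filter.Eventually.of_forall fun x => ?_)
          simp [norm_pow, Complex.sq_norm]
      _ = 1 - Complex.normSq m := h2
  have hkey : (t : ℂ) * m ^ 2 - S = ((t : ℂ) - 1) * m ^ 2 + (m ^ 2 - S) := by ring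
  rw [hkey]
  have habs1 : ‖((t : ℂ) - 1) * m ^ 2‖ = |t - 1| * ‖m‖ ^ 2 := by
    rw [norm_mul, norm_pow]
    congr 1
    rw [show (t : ℂ) - 1 = ((t - 1 : ℝ) : ℂ) by push_cast; ring, Complex.norm_real, Real.norm_eq_abs]
  have habs2 : ‖m ^ 2 - S‖ = ‖S - m ^ 2‖ := by
    rw [← norm_neg]; congr 1; ring
  have hnsq : Complex.normSq m = ‖m‖ ^ 2 := (Complex.sq_norm m).symm
  rw [hnsq] at h3
  calc ‖((t : ℂ) - 1) * m ^ 2 + (m ^ 2 - S)‖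
      ≤ ‖((t : ℂ) - 1) * m ^ 2‖ + ‖m ^ 2 - S‖ := norm_add_le _ _
    _ = |t - 1| * ‖m‖ ^ 2 + ‖S - m ^ 2‖ := by rw [habs1, habs2]
    _ ≤ |t - 1| * ‖m‖ ^ 2 + (1 - ‖m‖ ^ 2) := by linarith
    _ ≤ 1 := by
        have ht1 : |t - 1| ≤ 1 := abs_le.mpr ⟨by linarith, by linarith⟩
        nlinarith [abs_nonneg (t - 1), sq_nonneg ‖m‖]

theorem stmt_11 (β : ℝ) (hβ0 : 0 ≤ β) (hβ1 : β < 1) (n : ℕ) (hn : 2 ≤ n)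
    (μ : Measure (Set.Icc (0 : ℝ) (2 * Real.pi))) [IsProbabilityMeasure μ]
    (a : ℕ → ℂ)
    (han : a n = ((2 * (1 - β) / n : ℝ) : ℂ) *
      ∫ θ, Complex.exp (Complex.I * ((n : ℂ) - 1) * (θ : ℝ)) ∂μ)
    (han2 : a (2 * n - 1) = ((2 * (1 - β) / (2 * (n : ℝ) - 1) : ℝ) : ℂ) *
      ∫ θ, Complex.exp (Complex.I * (2 * (n : ℂ) - 2) * (θ : ℝ)) ∂μ)
    (lam : ℝ) (hlam0 : 0 < lam) (hlam : lam ≤ 4 / (3 * (1 - β))) :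
    ‖(lam : ℂ) * (a n) ^ 2 - a (2 * n - 1)‖ ≤
      2 * (1 - β) / (2 * (n : ℝ) - 1) := by
  have h1β : (0:ℝ) < 1 - β := by linarith
  have hn2 : (2:ℝ) ≤ (n:ℝ) := by exact_mod_cast hn
  have hnpos : (0:ℝ) < (n:ℝ) := by linarith
  have h2n1 : (0:ℝ) < 2 * (n:ℝ) - 1 := by linarith
  set g : Set.Icc (0:ℝ) (2 * Real.pi) → ℂ :=
    fun θ => Complex.exp (Complex.I * ((n : ℂ) - 1) * ((θ : ℝ) : ℂ)) with hg
  have hgcont : Continuous g := by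
    apply Complex.continuous_exp.comp
    exact continuous_const.mul (Complex.continuous_ofReal.comp continuous_subtype_val)
  have hgu : ∀ x, ‖g x‖ = 1 := by
    intro x
    rw [hg]
    simp only [Complex.norm_exp]
    have : (Complex.I * ((n : ℂ) - 1) * (((x : ℝ) : ℂ))).re = 0 := by
      simp [Complex.mul_re, Complex.mul_im]
    rw [this, Real.exp_zero]
  have hsq : ∀ θ : Set.Icc (0:ℝ) (2 * Real.pi),
      Complex.exp (Complex.I * (2 * (n : ℂ) - 2) * ((θ : ℝ) : ℂ)) = (g θ) ^ 2 := by
    intro θ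
    rw [hg]
    rw [show Complex.I * (2 * (n : ℂ) - 2) * ((θ : ℝ) : ℂ)
        = ((2:ℕ) : ℂ) * (Complex.I * ((n : ℂ) - 1) * ((θ : ℝ) : ℂ)) by push_cast; ring,
      Complex.exp_nat_mul]
  set c1 : ℝ := 2 * (1 - β) / n with hc1
  set c2 : ℝ := 2 * (1 - β) / (2 * (n:ℝ) - 1) with hc2
  have hc2pos : 0 < c2 := by rw [hc2]; positivity
  set t : ℝ := lam * c1 ^ 2 / c2 with ht
  have ht0 : 0 ≤ t := by
    rw [ht]
    positivity
  have hlam' : lam * (3 * (1 - β)) ≤ 4 := by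
    rw [le_div_iff₀ (by positivity : (0:ℝ) < 3 * (1 - β))] at hlam
    linarith
  have h43 : lam * (1 - β) ≤ 4 / 3 := by linarith
  have key : lam * (1 - β) * (2 * (n:ℝ) - 1) ≤ (n:ℝ) ^ 2 := by
    nlinarith [mul_le_mul_of_nonneg_right h43 h2n1.le,
      mul_nonneg (by linarith : (0:ℝ) ≤ 3 * (n:ℝ) - 2) (by linarith : (0:ℝ) ≤ (n:ℝ) - 2)]
  have hcalc : lam * c1 ^ 2 ≤ 2 * c2 := by
    have hpos : (0:ℝ) < (n:ℝ) ^ 2 * (2 * (n:ℝ) - 1) := by positivity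
    have e1 : lam * c1 ^ 2 * ((n:ℝ) ^ 2 * (2 * (n:ℝ) - 1))
        = 4 * (1 - β) * (lam * (1 - β) * (2 * (n:ℝ) - 1)) := by
      rw [hc1]; field_simp; ring
    have e2 : 2 * c2 * ((n:ℝ) ^ 2 * (2 * (n:ℝ) - 1)) = 4 * (1 - β) * ((n:ℝ) ^ 2) := by
      rw [hc2]; field_simp; ring
    have hle : lam * c1 ^ 2 * ((n:ℝ) ^ 2 * (2 * (n:ℝ) - 1))
        ≤ 2 * c2 * ((n:ℝ) ^ 2 * (2 * (n:ℝ) - 1)) := by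
      rw [e1, e2]
      nlinarith [key, h1β]
    exact le_of_mul_le_mul_right hle hpos
  have ht2 : t ≤ 2 := by
    rw [ht, div_le_iff₀ hc2pos]
    linarith
  set m : ℂ := ∫ θ, g θ ∂μ with hm
  set S : ℂ := ∫ θ, (g θ) ^ 2 ∂μ with hS
  have keyb := aux_bound μ g hgcont.aestronglyMeasurable hgu t ht0 ht2
  have han' : a n = ((c1 : ℝ) : ℂ) * m := by rw [han]
  have han2' : a (2 * n - 1) = ((c2 : ℝ) : ℂ) * S := by
    rw [han2, hS]
    congr 1
    exact integral_congr_ae (Filter.Eventually.of_forall fun θ => hsq θ)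
  have hc2ne : ((c2 : ℝ) : ℂ) ≠ 0 := by exact_mod_cast (ne_of_gt hc2pos)
  have hfact : (lam : ℂ) * (a n) ^ 2 - a (2 * n - 1)
      = ((c2 : ℝ) : ℂ) * ((t : ℂ) * m ^ 2 - S) := by
    rw [han', han2', ht]
    push_cast
    field_simp
  rw [hfact, norm_mul, Complex.norm_real, Real.norm_eq_abs, abs_of_pos hc2pos]
  calc c2 * ‖(t : ℂ) * m ^ 2 - S‖ ≤ c2 * 1 :=
        mul_le_mul_of_nonneg_left keyb (le_of_lt hc2pos)
    _ = c2 := mul_one c2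
end

section
/- Let f(z) = z + ∑_{n≥2} aₙ zⁿ satisfy ∑_{n≥2} (3n−2)|aₙ| ≤ 1 (a sufficient condition for uniform starlikeness). Then for every λ > 0 and n ≥ 2, |λ aₙ² − a_{2n−1}| ≤ max{λ/(3n−2)², 1/(6n−5)}. -/
theorem stmt_12 (a : ℕ → ℂ)
    (hsum : Summable (fun n : ℕ => (3 * ((n : ℝ) + 2) - 2) * ‖a (n + 2)‖))
    (h : ∑' n : ℕ, (3 * ((n : ℝ) + 2) - 2) * ‖a (n + 2)‖ ≤ 1)
    (lam : ℝ) (hlam : 0 < lam) (n : ℕ) (hn : 2 ≤ n) :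
    ‖lam * (a n) ^ 2 - a (2 * n - 1)‖ ≤
      max (lam / (3 * (n : ℝ) - 2) ^ 2) (1 / (6 * (n : ℝ) - 5)) := by
  have hn' : (2:ℝ) ≤ (n:ℝ) := by exact_mod_cast hn
  set A := ‖a n‖ with hAdef
  set B := ‖a (2 * n - 1)‖ with hBdef
  have hA0 : 0 ≤ A := norm_nonneg _
  have hB0 : 0 ≤ B := norm_nonneg _
  set p : ℝ := 3 * (n:ℝ) - 2 with hpdef
  set q : ℝ := 6 * (n:ℝ) - 5 with hqdef
  have hp : 0 < p := by simp only [hpdef]; linarith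
  have hq : 0 < q := by simp only [hqdef]; linarith
  -- key: p*A + q*B ≤ 1
  have hAB : p * A + q * B ≤ 1 := by
    have hne : n - 2 ≠ 2 * n - 3 := by omega
    have hterm : ∀ k : ℕ, 0 ≤ (3 * ((k : ℝ) + 2) - 2) * ‖a (k + 2)‖ := by
      intro k
      have : (0:ℝ) ≤ (k:ℝ) := Nat.cast_nonneg k
      exact mul_nonneg (by linarith) (norm_nonneg _)
    have key := Summable.sum_le_tsum ({n - 2, 2 * n - 3} : Finset ℕ)
      (fun k _ => hterm k) hsum
    rw [Finset.sum_pair hne] at key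
    have e1 : n - 2 + 2 = n := by omega
    have e2 : 2 * n - 3 + 2 = 2 * n - 1 := by omega
    have c1 : ((n - 2 : ℕ) : ℝ) = (n:ℝ) - 2 := by
      rw [Nat.cast_sub hn]; norm_num
    have c2 : ((2 * n - 3 : ℕ) : ℝ) = 2 * (n:ℝ) - 3 := by
      rw [Nat.cast_sub (by omega)]; push_cast; ring
    rw [e1, e2, c1, c2] at key
    have := le_trans key h
    simp only [hpdef, hqdef]
    nlinarith [this]
  -- triangle inequality
  have htri : ‖lam * (a n) ^ 2 - a (2 * n - 1)‖ ≤ lam * A ^ 2 + B := by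
    calc ‖lam * (a n) ^ 2 - a (2 * n - 1)‖
        ≤ ‖lam * (a n) ^ 2‖ + ‖a (2 * n - 1)‖ :=
          norm_sub_le _ _
      _ = lam * A ^ 2 + B := by
          rw [norm_mul, norm_pow]
          simp [Complex.norm_real, abs_of_pos hlam, hAdef, hBdef]
  refine htri.trans ?_
  set M := max (lam / p ^ 2) (1 / q) with hMdef
  have hM1 : lam / p ^ 2 ≤ M := le_max_left _ _
  have hM2 : 1 / q ≤ M := le_max_right _ _
  -- let t = q*B ∈ [0,1]
  have ht1 : q * B ≤ 1 := by nlinarith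
  have hA2 : p * A ≤ 1 - q * B := by linarith
  have h0 : 0 ≤ 1 - q * B := le_trans (mul_nonneg hp.le hA0) hA2
  have hsq : p ^ 2 * A ^ 2 ≤ 1 - q * B := by
    nlinarith [mul_le_mul hA2 hA2 (mul_nonneg hp.le hA0) h0,
      mul_nonneg hq.le hB0, ht1]
  have hM0 : 0 < M := lt_of_lt_of_le (by positivity) hM2
  have hM1' : lam ≤ M * p ^ 2 := by
    rw [hMdef] at hM1 ⊢
    exact (div_le_iff₀ (by positivity)).mp hM1
  have hM2' : 1 ≤ M * q := by
    rw [hMdef] at hM2 ⊢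
    have := (div_le_iff₀ hq).mp hM2
    linarith
  nlinarith [mul_le_mul_of_nonneg_right hM1' (sq_nonneg A),
    mul_le_mul_of_nonneg_right hM2' hB0,
    mul_le_mul_of_nonneg_left hsq (le_of_lt hM0)]
end

section
/- Let f(z) = z + ∑_{n≥2} aₙ zⁿ satisfy ∑_{n≥2} n(2n−1)|aₙ| ≤ 1 (a sufficient condition for uniform convexity). Then for every λ > 0 and n ≥ 2, |λ aₙ² − a_{2n−1}| ≤ max{λ/(n(2n−1))², 1/((2n−1)(4n−3))}. -/
theorem stmt_13 (a : ℕ → ℂ)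
    (hsum : Summable (fun n : ℕ =>
      ((n : ℝ) + 2) * (2 * ((n : ℝ) + 2) - 1) * ‖a (n + 2)‖))
    (h : ∑' n : ℕ, ((n : ℝ) + 2) * (2 * ((n : ℝ) + 2) - 1) * ‖a (n + 2)‖ ≤ 1)
    (lam : ℝ) (hlam : 0 < lam) (n : ℕ) (hn : 2 ≤ n) :
    ‖lam * (a n) ^ 2 - a (2 * n - 1)‖ ≤
      max (lam / ((n : ℝ) * (2 * (n : ℝ) - 1)) ^ 2)
        (1 / ((2 * (n : ℝ) - 1) * (4 * (n : ℝ) - 3))) := by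
  have hn' : (2:ℝ) ≤ (n:ℝ) := by exact_mod_cast hn
  set A : ℝ := ‖a n‖ with hA
  set B : ℝ := ‖a (2 * n - 1)‖ with hB
  have hA0 : 0 ≤ A := norm_nonneg _
  have hB0 : 0 ≤ B := norm_nonneg _
  set rn : ℝ := (n:ℝ) * (2 * (n:ℝ) - 1) with hrn
  set r2 : ℝ := (2 * (n:ℝ) - 1) * (4 * (n:ℝ) - 3) with hr2
  have hrnpos : 0 < rn := by nlinarith
  have hr2pos : 0 < r2 := by nlinarith
  -- key coefficient bound
  have hnonneg : ∀ k : ℕ, 0 ≤ ((k : ℝ) + 2) * (2 * ((k : ℝ) + 2) - 1) * ‖a (k + 2)‖ := by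
    intro k
    have hk : (0:ℝ) ≤ (k:ℝ) := Nat.cast_nonneg k
    exact mul_nonneg (mul_nonneg (by positivity) (by nlinarith)) (norm_nonneg _)
  have hne : n - 2 ≠ 2 * n - 3 := by omega
  have hsum2 := Summable.sum_le_tsum ({n - 2, 2 * n - 3} : Finset ℕ)
    (fun k _ => hnonneg k) hsum
  rw [Finset.sum_pair hne] at hsum2
  have e1 : n - 2 + 2 = n := by omega
  have e2 : 2 * n - 3 + 2 = 2 * n - 1 := by omega
  have c1 : ((n - 2 : ℕ) : ℝ) = (n:ℝ) - 2 := by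
    have : (2:ℕ) ≤ n := hn
    push_cast [this]
    ring
  have c2 : ((2 * n - 3 : ℕ) : ℝ) = 2 * (n:ℝ) - 3 := by
    have h3 : (3:ℕ) ≤ 2 * n := by omega
    push_cast [h3]
    ring
  rw [e1, e2, c1, c2] at hsum2
  have key : rn * A + r2 * B ≤ 1 := by
    refine le_trans (le_of_eq ?_) (hsum2.trans h)
    rw [hrn, hr2, hA, hB]
    ring
  have hxA : rn * A ≤ 1 := by nlinarith
  -- triangle inequality
  have tri : ‖lam * (a n) ^ 2 - a (2 * n - 1)‖ ≤ lam * A ^ 2 + B := by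
    calc ‖lam * (a n) ^ 2 - a (2 * n - 1)‖
        ≤ ‖lam * (a n) ^ 2‖ + ‖a (2 * n - 1)‖ := by
          have := norm_sub_le ((lam : ℂ) * (a n) ^ 2) (a (2 * n - 1))
          exact this
      _ = lam * A ^ 2 + B := by
          rw [norm_mul, norm_pow]
          rw [Complex.norm_real, Real.norm_eq_abs, abs_of_pos hlam, hA, hB]
  refine tri.trans ?_
  set M : ℝ := max (lam / rn ^ 2) (1 / r2) with hM
  have hM1 : lam ≤ M * rn ^ 2 := by
    have := le_max_left (lam / rn ^ 2) (1 / r2)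
    rw [div_le_iff₀ (by positivity)] at this
    linarith [this.trans_eq (rfl : M * rn ^ 2 = M * rn ^ 2)]
  have hM2 : (1:ℝ) ≤ M * r2 := by
    have := le_max_right (lam / rn ^ 2) (1 / r2)
    rw [div_le_iff₀ hr2pos] at this
    linarith
  have hM0 : 0 ≤ M := le_trans (by positivity) (le_max_left _ _)
  -- lam * A^2 + B ≤ M
  have hra : 0 ≤ rn * A := mul_nonneg hrnpos.le hA0
  have hsq : (rn * A) ^ 2 ≤ rn * A := by nlinarith
  have h1 : lam * A ^ 2 ≤ M * (rn * A) :=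
    calc lam * A ^ 2 ≤ (M * rn ^ 2) * A ^ 2 :=
          mul_le_mul_of_nonneg_right hM1 (sq_nonneg A)
      _ = M * (rn * A) ^ 2 := by ring
      _ ≤ M * (rn * A) := mul_le_mul_of_nonneg_left hsq hM0
  have h2 : B ≤ M * (r2 * B) := by
    nlinarith [mul_le_mul_of_nonneg_right hM2 hB0]
  calc lam * A ^ 2 + B ≤ M * (rn * A) + M * (r2 * B) := add_le_add h1 h2
    _ = M * (rn * A + r2 * B) := by ring
    _ ≤ M * 1 := mul_le_mul_of_nonneg_left key hM0
    _ = M := mul_one M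
end

section
/- Fix β ∈ [0,1). Let f(z) = z + ∑_{n≥2} aₙ zⁿ satisfy ∑_{n≥2} ((n−β)/(1−β))|aₙ| ≤ 1. Then for every λ > 0 and n ≥ 2, |λ aₙ² − a_{2n−1}| ≤ max{λ(1−β)²/(n−β)², (1−β)/(2n−1−β)}. -/
lemma stmt_14_aux (p q x y : ℝ) (hp : 0 ≤ p) (hq : 0 ≤ q) (hx : 0 ≤ x) (hy : 0 ≤ y)
    (hxy : x + y ≤ 1) : p * x ^ 2 + q * y ≤ max p q := by
  have hx1 : x ≤ 1 := by linarith
  have h1 : p * x ^ 2 ≤ p * x := by nlinarith [mul_nonneg hp hx]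
  have hmp := le_max_left p q
  have hmq := le_max_right p q
  have hm : 0 ≤ max p q := le_trans hp hmp
  nlinarith [mul_le_mul_of_nonneg_right hmp hx, mul_le_mul_of_nonneg_right hmq hy]

theorem stmt_14 (β : ℝ) (hβ0 : 0 ≤ β) (hβ1 : β < 1) (a : ℕ → ℂ)
    (hsum : Summable (fun n : ℕ =>
      (((n : ℝ) + 2 - β) / (1 - β)) * ‖a (n + 2)‖))
    (h : ∑' n : ℕ, (((n : ℝ) + 2 - β) / (1 - β)) * ‖a (n + 2)‖ ≤ 1)
    (lam : ℝ) (hlam : 0 < lam) (n : ℕ) (hn : 2 ≤ n) :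
    ‖lam * (a n) ^ 2 - a (2 * n - 1)‖ ≤
      max (lam * (1 - β) ^ 2 / ((n : ℝ) - β) ^ 2)
        ((1 - β) / (2 * (n : ℝ) - 1 - β)) := by
  have hc0 : (0:ℝ) < 1 - β := by linarith
  have hnR : (2:ℝ) ≤ (n:ℝ) := by exact_mod_cast hn
  have hnb : 0 < (n:ℝ) - β := by linarith
  have hm : 0 < 2 * (n:ℝ) - 1 - β := by linarith
  set t : ℕ → ℝ := fun k => (((k:ℝ) + 2 - β) / (1 - β)) * ‖a (k + 2)‖ with ht
  have htnn : ∀ k, 0 ≤ t k := by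
    intro k
    apply mul_nonneg
    · apply div_nonneg _ (le_of_lt hc0)
      have : (0:ℝ) ≤ (k:ℝ) := Nat.cast_nonneg k
      linarith
    · exact norm_nonneg _
  have hij : (n - 2 : ℕ) ≠ 2 * n - 3 := by omega
  have hsum2 : t (n - 2) + t (2 * n - 3) ≤ 1 := by
    have hfin : ∑ k ∈ ({n - 2, 2 * n - 3} : Finset ℕ), t k ≤ ∑' k, t k :=
      Summable.sum_le_tsum _ (fun k _ => htnn k) hsum
    rw [Finset.sum_insert (by simp [hij]), Finset.sum_singleton] at hfin
    exact le_trans hfin h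
  set A := ‖a n‖ with hA
  set B := ‖a (2 * n - 1)‖ with hB
  have e1 : t (n - 2) = (((n:ℝ) - β) / (1 - β)) * A := by
    have h1 : n - 2 + 2 = n := by omega
    have h2 : ((n - 2 : ℕ) : ℝ) = (n:ℝ) - 2 := by
      have := Nat.cast_sub hn (R := ℝ); push_cast at this ⊢; linarith
    rw [ht]; simp only [h1, h2, hA]; ring_nf
  have e2 : t (2 * n - 3) = ((2 * (n:ℝ) - 1 - β) / (1 - β)) * B := by
    have h1 : 2 * n - 3 + 2 = 2 * n - 1 := by omega
    have h2 : ((2 * n - 3 : ℕ) : ℝ) = 2 * (n:ℝ) - 3 := by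
      have h3 : (3:ℕ) ≤ 2 * n := by omega
      have := Nat.cast_sub h3 (R := ℝ); push_cast at this ⊢; linarith
    rw [ht]; simp only [h1, h2, hB]; ring_nf
  set x := (((n:ℝ) - β) / (1 - β)) * A with hx
  set y := ((2 * (n:ℝ) - 1 - β) / (1 - β)) * B with hy
  have hxy : x + y ≤ 1 := by rw [← e1, ← e2]; exact hsum2
  have hxnn : 0 ≤ x := mul_nonneg (div_nonneg hnb.le hc0.le) (norm_nonneg _)
  have hynn : 0 ≤ y := mul_nonneg (div_nonneg hm.le hc0.le) (norm_nonneg _)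
  have tri : ‖lam * (a n) ^ 2 - a (2 * n - 1)‖ ≤ lam * A ^ 2 + B := by
    have := norm_sub_le ((lam : ℂ) * (a n) ^ 2) (a (2 * n - 1))
    calc ‖lam * (a n) ^ 2 - a (2 * n - 1)‖
        ≤ ‖(lam : ℂ) * (a n) ^ 2‖ + B := this
      _ = lam * A ^ 2 + B := by
          rw [norm_mul, norm_pow, Complex.norm_real, Real.norm_of_nonneg hlam.le]
  set p := lam * (1 - β) ^ 2 / ((n:ℝ) - β) ^ 2 with hp
  set q := (1 - β) / (2 * (n:ℝ) - 1 - β) with hq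
  have key : lam * A ^ 2 + B = p * x ^ 2 + q * y := by
    rw [hp, hq, hx, hy]
    have h1 := hm.ne'
    have h2 := hnb.ne'
    have h3 := hc0.ne'
    field_simp
    rw [mul_div_assoc, div_self (by linarith), mul_one]
  have hpnn : 0 ≤ p := by
    apply div_nonneg _ (sq_nonneg _)
    positivity
  have hqnn : 0 ≤ q := div_nonneg hc0.le hm.le
  calc ‖lam * (a n) ^ 2 - a (2 * n - 1)‖ ≤ lam * A ^ 2 + B := tri
    _ = p * x ^ 2 + q * y := key
    _ ≤ max p q := stmt_14_aux p q x y hpnn hqnn hxnn hynn hxy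
end

section
/- Let λ > 0, n ≥ 2, r₁ = r(n) > 0, r₂ = r(2n−1) > 0, and suppose a, b ∈ ℂ satisfy r₁|a| + r₂|b| ≤ 1 and |λa² − b| = max{λ/r₁², 1/r₂}, with λ < r₁²/r₂. Then a = 0 and |b| = 1/r₂. -/
theorem stmt_15 (lam : ℝ) (hlam : 0 < lam) (n : ℕ) (hn : 2 ≤ n)
    (r1 r2 : ℝ) (hr1 : 0 < r1) (hr2 : 0 < r2) (a b : ℂ)
    (h1 : r1 * ‖a‖ + r2 * ‖b‖ ≤ 1)
    (h2 : ‖(lam * a ^ 2 - b : ℂ)‖ = max (lam / r1 ^ 2) (1 / r2))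
    (h3 : lam < r1 ^ 2 / r2) :
    a = 0 ∧ ‖b‖ = 1 / r2 := by
  set u := ‖a‖ with hu
  set v := ‖b‖ with hv
  have hu0 : 0 ≤ u := norm_nonneg a
  have hv0 : 0 ≤ v := norm_nonneg b
  have hmax : max (lam / r1 ^ 2) (1 / r2) = 1 / r2 := by
    apply max_eq_right
    have h3' : lam * r2 < r1 ^ 2 := (lt_div_iff₀ hr2).mp h3
    rw [div_le_div_iff₀ (by positivity) hr2]
    nlinarith
  have htri : ‖(lam * a ^ 2 - b : ℂ)‖ ≤ lam * u ^ 2 + v := by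
    calc ‖(lam * a ^ 2 - b : ℂ)‖ ≤ ‖(lam * a ^ 2 : ℂ)‖ + ‖b‖ :=
          norm_sub_le _ _
      _ = lam * u ^ 2 + v := by
          rw [norm_mul, norm_pow, Complex.norm_real, Real.norm_of_nonneg hlam.le]
  have hkey : 1 / r2 ≤ lam * u ^ 2 + v := by rw [h2, hmax] at htri; linarith
  have hult : u ≤ 1 / r1 := by
    rw [le_div_iff₀ hr1]; nlinarith
  have hv_le : v ≤ (1 - r1 * u) / r2 := by
    rw [le_div_iff₀ hr2]; nlinarith
  have hl : lam / r1 < r1 / r2 := by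
    have h3' : lam * r2 < r1 ^ 2 := (lt_div_iff₀ hr2).mp h3
    rw [div_lt_div_iff₀ hr1 hr2]
    nlinarith
  have hu_eq : u = 0 := by
    by_contra h
    have hup : 0 < u := lt_of_le_of_ne hu0 (Ne.symm h)
    have h5 : lam * u < r1 / r2 := by
      calc lam * u ≤ lam * (1 / r1) := by nlinarith
        _ = lam / r1 := by ring
        _ < r1 / r2 := hl
    have : lam * u ^ 2 + v < 1 / r2 := by
      have : lam * u ^ 2 < (r1 / r2) * u := by nlinarith
      have hvr : v ≤ 1 / r2 - (r1 / r2) * u := by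
        have heq : (1 - r1 * u) / r2 = 1 / r2 - (r1 / r2) * u := by ring
        linarith [hv_le, heq ▸ hv_le]
      linarith
    linarith
  have ha : a = 0 := norm_eq_zero.mp (by rw [← hu, hu_eq])
  refine ⟨ha, ?_⟩
  have h6 : 1 / r2 ≤ v := by rw [hu_eq] at hkey; simpa using hkey
  have h7 : v ≤ 1 / r2 := by
    rw [le_div_iff₀ hr2]; nlinarith
  linarith
end

section
/- Let λ > 0, n ≥ 2, r₁ = r(n) > 0, r₂ = r(2n−1) > 0, and suppose a, b ∈ ℂ satisfy r₁|a| + r₂|b| ≤ 1 and |λa² − b| = max{λ/r₁², 1/r₂}, with λ > r₁²/r₂. Then b = 0 and |a| = 1/r₁. -/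
theorem stmt_16 (lam : ℝ) (hlam : 0 < lam) (n : ℕ) (hn : 2 ≤ n)
    (r1 r2 : ℝ) (hr1 : 0 < r1) (hr2 : 0 < r2) (a b : ℂ)
    (h1 : r1 * ‖a‖ + r2 * ‖b‖ ≤ 1)
    (h2 : ‖(lam * a ^ 2 - b : ℂ)‖ = max (lam / r1 ^ 2) (1 / r2))
    (h3 : r1 ^ 2 / r2 < lam) :
    b = 0 ∧ ‖a‖ = 1 / r1 := by
  set u := ‖a‖ with hu_def
  set v := ‖b‖ with hv_def
  have hu : 0 ≤ u := norm_nonneg a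
  have hv : 0 ≤ v := norm_nonneg b
  have h3' : r1 ^ 2 < lam * r2 := by
    rw [div_lt_iff₀ hr2] at h3; linarith
  have hmax : max (lam / r1 ^ 2) (1 / r2) = lam / r1 ^ 2 := by
    apply max_eq_left
    rw [div_le_div_iff₀ hr2 (by positivity)]
    nlinarith
  have habs2 : ‖(lam : ℂ) * a ^ 2‖ = lam * u ^ 2 := by
    rw [norm_mul, norm_pow, Complex.norm_real, Real.norm_eq_abs, abs_of_pos hlam, hu_def]
  have key : lam / r1 ^ 2 ≤ lam * u ^ 2 + v := by
    rw [← hmax, ← h2]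
    calc ‖(lam : ℂ) * a ^ 2 - b‖
        ≤ ‖(lam : ℂ) * a ^ 2‖ + ‖b‖ := by
          have := norm_sub_le ((lam : ℂ) * a ^ 2) b
          simpa using this
      _ = lam * u ^ 2 + v := by rw [habs2, hv_def]
  have key' : lam ≤ r1 ^ 2 * (lam * u ^ 2 + v) := by
    rw [div_le_iff₀ (by positivity)] at key
    linarith [key]
  have hrv : r2 * v ≤ 1 := by nlinarith [mul_nonneg hr1.le hu]
  have hA : r1 * u ≤ 1 - r2 * v := by linarith
  have hsq : (r1 * u) ^ 2 ≤ (1 - r2 * v) ^ 2 :=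
    pow_le_pow_left₀ (mul_nonneg hr1.le hu) hA 2
  have hv0 : v = 0 := by
    have hprod : 0 ≤ lam * r2 * v * (1 - r2 * v) :=
      mul_nonneg (mul_nonneg (mul_nonneg hlam.le hr2.le) hv) (by linarith)
    nlinarith [hsq, key', hprod, mul_nonneg hv hv]
  have hb : b = 0 := by
    have : ‖b‖ = 0 := hv0
    exact norm_eq_zero.mp this
  have hule : u ≤ 1 / r1 := by
    rw [le_div_iff₀ hr1]; nlinarith
  have huge : 1 / r1 ≤ u := by
    rw [div_le_iff₀ hr1]
    have key'' : lam ≤ r1 ^ 2 * (lam * u ^ 2) := by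
      rw [hv0] at key'; linarith
    nlinarith [key'', mul_nonneg hlam.le (mul_nonneg hr1.le hu), hlam, mul_nonneg hr1.le hu]
  exact ⟨hb, le_antisymm hule huge⟩
end
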